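/- arXiv:1907.09113 — 8 statements merged into one kernel-verified Lean document; each statement's English description precedes it below -/
import Mathlib

section
/- No quota rule preserves being a defeat graph. That is, for every quota q ∈ [0,1] there exist a number of agents n, a value-based argumentation framework VAF = ⟨A, →, V, val⟩, and a profile ⟨AF_1, …, AF_n⟩ such that each AF_i is a defeat graph of the VAF induced by some audience, yet the output of the quota rule with quota q on this profile is not the defeat graph of the VAF induced by any audience. (Witness: A = {a_1, …, a_n} with 1/n < q, attack relation forming the directed cycle a_1 → a_2 → … → a_n → a_1, val(a_i) = v_i all distinct, and agent i's defeat graph containing exactly the single attack a_i → a_{i+1} (indices mod n); the quota rule outputs the empty attack relation, which no audience induces.) -/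
/-- An audience is a strict linear order on values: irreflexive, transitive and
complete (any two distinct values are comparable). -/
def IsAudience {V : Type} (P : V → V → Prop) : Prop :=
  (∀ v, ¬ P v v) ∧ (∀ u v w, P u v → P v w → P u w) ∧ (∀ v w, v ≠ w → P v w ∨ P w v)

/-- Given a VAF with attack relation `att` and value labelling `val`, and an audience `P`,
argument `a` defeats `b` iff `a` attacks `b` and `val b` is not preferred to `val a`.
`defeats att val P` is the defeat graph induced by `P`. -/
def defeats {A V : Type} (att : A → A → Prop) (val : A → V) (P : V → V → Prop) :
    A → A → Prop :=
  fun a b => att a b ∧ ¬ P (val b) (val a)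

open Fin.NatCast in
lemma cycleP' {m : ℕ} (P : Fin (m+2) → Fin (m+2) → Prop) (hP : IsAudience P)
    (h : ∀ a : Fin (m+2), P (a+1) a) : False := by
  have key : ∀ k : ℕ, P ((k+1 : ℕ) : Fin (m+2)) ((0 : ℕ) : Fin (m+2)) := by
    intro k
    induction k with
    | zero => simpa using h 0
    | succ k ih =>
        have h2 := h ((k+1 : ℕ) : Fin (m+2))
        push_cast at h2 ih ⊢
        exact hP.2.1 _ _ _ h2 ih
  have h3 := key (m+1)
  rw [show ((m+1+1 : ℕ) : Fin (m+2)) = ((m+2 : ℕ) : Fin (m+2)) by norm_num,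
      Fin.natCast_self] at h3
  simp only [Nat.cast_zero] at h3
  exact hP.1 _ h3

lemma sub_one_val' {m : ℕ} (c : Fin (m+2)) : c = 0 ↔ ¬ ((c - 1).val < c.val) := by
  rcases eq_or_ne c 0 with h | h
  · subst h
    simp
  · simp only [h, false_iff, not_not]
    rw [Fin.coe_sub_one, if_neg h]
    have hc : 0 < c.val := Fin.pos_of_ne_zero h
    omega

open Fin.CommRing in
lemma step' {m : ℕ} (i a : Fin (m+2)) :
    a = i ↔ ¬ ((a - (i+1)).val < (a + 1 - (i+1)).val) := by
  have h3 : a + 1 - (i + 1) = a - i := by ring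
  have h2 : a - (i+1) = (a - i) - 1 := by ring
  rw [h3, h2, ← sub_one_val', sub_eq_zero]

lemma key_construction (m : ℕ) (t : ℕ) (ht : t = 0 ∨ 2 ≤ t) :
      ∃ (A : Type) (_ : Fintype A) (V : Type) (att : A → A → Prop) (val : A → V)
        (AF : Fin (m+2) → A → A → Prop),
        (∀ i, ∃ P : V → V → Prop, IsAudience P ∧ AF i = defeats att val P) ∧
        ¬ ∃ P : V → V → Prop, IsAudience P ∧
            (fun a b => t ≤ Nat.card {i : Fin (m+2) // AF i a b}) = defeats att val P := by
  refine ⟨Fin (m+2), inferInstance, Fin (m+2), fun a b => b = a + 1, id,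
    fun i a b => b = a + 1 ∧ a = i, ?_, ?_⟩
  · -- each AF i is a defeat graph
    intro i
    refine ⟨fun u v => (v - (i+1)).val < (u - (i+1)).val, ⟨?_, ?_, ?_⟩, ?_⟩
    · intro v; exact lt_irrefl _
    · intro u v w h1 h2; exact lt_trans h2 h1
    · intro v w hvw
      rcases lt_or_gt_of_ne (fun hh : (w - (i+1)).val = (v - (i+1)).val => by
        exact hvw (sub_left_inj.mp (Fin.ext hh)).symm) with h | h
      · exact Or.inl h
      · exact Or.inr h
    · funext a b
      show (b = a + 1 ∧ a = i) = defeats (fun a b => b = a + 1) id _ a b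
      unfold defeats
      simp only [id]
      apply propext
      constructor
      · rintro ⟨hb, hi⟩
        exact ⟨hb, by rw [hb]; exact (step' i a).mp hi⟩
      · rintro ⟨hb, hnp⟩
        rw [hb] at hnp
        exact ⟨hb, (step' i a).mpr hnp⟩
  · -- output is not a defeat graph
    rintro ⟨P, hP, heq⟩
    rcases ht with ht | ht
    · -- t = 0 : output is the complete graph, but defeats 0 0 needs att 0 0
      have h00 := congrFun (congrFun heq 0) 0
      have hd : defeats (fun a b => b = a + 1) id P (0 : Fin (m+2)) 0 := by
        rw [← h00, ht]
        exact Nat.zero_le _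
      have h01 : (0 : Fin (m+2)) = 0 + 1 := hd.1
      rw [zero_add] at h01
      have := Fin.one_eq_zero_iff.mp h01.symm
      omega
    · -- 2 ≤ t : output is empty, forcing P (a+1) a for all a
      apply cycleP' P hP
      intro a
      have hc := congrFun (congrFun heq a) (a + 1)
      have hcard : Nat.card {i : Fin (m+2) // a + 1 = a + 1 ∧ a = i} ≤ 1 := by
        have hs : Subsingleton {i : Fin (m+2) // a + 1 = a + 1 ∧ a = i} :=
          ⟨fun x y => Subtype.ext (x.2.2.symm.trans y.2.2)⟩
        rcases isEmpty_or_nonempty {i : Fin (m+2) // a + 1 = a + 1 ∧ a = i} with he | hne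
        · simp [Nat.card_of_isEmpty]
        · exact le_of_eq Nat.card_unique
      have hfalse : ¬ (t ≤ Nat.card {i : Fin (m+2) // a + 1 = a + 1 ∧ a = i}) := by omega
      rw [hc] at hfalse
      unfold defeats at hfalse
      simp only [id] at hfalse
      by_contra hnp
      exact hfalse ⟨by trivial, hnp⟩

/-- No quota rule preserves being a defeat graph: for every quota
`q ∈ [0,1]` there are `n` agents, a VAF `⟨A, att, V, val⟩` and a profile of defeat
graphs of that VAF such that the quota rule's output (accepting an edge iff at least
`⌊q·n⌋` agents have it) is not the defeat graph induced by any audience. -/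
theorem quota_rules_do_not_preserve_defeat_graphs :
    ∀ q : ℝ, 0 ≤ q → q ≤ 1 →
      ∃ (n : ℕ) (A : Type) (_ : Fintype A) (V : Type) (att : A → A → Prop) (val : A → V)
        (AF : Fin n → A → A → Prop),
        (∀ i, ∃ P : V → V → Prop, IsAudience P ∧ AF i = defeats att val P) ∧
        ¬ ∃ P : V → V → Prop, IsAudience P ∧
            (fun a b => ⌊q * (n : ℝ)⌋₊ ≤ Nat.card {i : Fin n // AF i a b})
              = defeats att val P := by
  intro q hq0 hq1
  rcases eq_or_lt_of_le hq0 with hq | hq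
  · -- q = 0
    refine ⟨2, ?_⟩
    have h0 : ⌊q * ((2:ℕ) : ℝ)⌋₊ = 0 := by rw [← hq]; simp
    obtain ⟨A, fA, V, att, val, AF, h1, h2⟩ := key_construction 0 ⌊q * ((2:ℕ) : ℝ)⌋₊ (Or.inl h0)
    exact ⟨A, fA, V, att, val, AF, h1, h2⟩
  · -- q > 0
    set n : ℕ := ⌈2 / q⌉₊ with hn
    have hdiv : (2 : ℝ) ≤ 2 / q := by
      rw [le_div_iff₀ hq]
      nlinarith
    have hfloor : 2 ≤ ⌊q * (n : ℝ)⌋₊ := by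
      apply Nat.le_floor
      have h1 : (2 : ℝ) / q ≤ (n : ℝ) := Nat.le_ceil _
      have h2 : q * (2 / q) ≤ q * (n : ℝ) := by
        apply mul_le_mul_of_nonneg_left h1 (le_of_lt hq)
      rw [mul_div_cancel₀ _ (ne_of_gt hq)] at h2
      exact_mod_cast h2
    have hn2 : 2 ≤ n := by
      have h := Nat.le_ceil (2 / q)
      have : (2 : ℝ) ≤ (n : ℝ) := le_trans hdiv h
      exact_mod_cast this
    obtain ⟨m, hm⟩ : ∃ m, n = m + 2 := ⟨n - 2, by omega⟩
    refine ⟨n, ?_⟩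
    rw [hm] at hfloor ⊢
    obtain ⟨A, fA, V, att, val, AF, h1, h2⟩ :=
      key_construction m ⌊q * ((m+2 : ℕ) : ℝ)⌋₊ (Or.inr hfloor)
    exact ⟨A, fA, V, att, val, AF, h1, h2⟩
end

section
/- A graph aggregation rule F on profiles of n argumentation frameworks over a fixed set of arguments A is anonymous, monotonic, and independent if and only if F is a quota rule, i.e., for every ordered pair of arguments (a,b) there is a threshold t_{a→b} ∈ {0, 1, …, n+1} such that for every profile AF, a → b ∈ F(AF) iff |N^{a→b}_{AF}| ≥ t_{a→b}. -/
open Classical in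
lemma perm_of_card_eq {n : ℕ} (p q : Fin n → Prop)
    (h : Nat.card {i // p i} = Nat.card {i // q i}) :
    ∃ π : Equiv.Perm (Fin n), ∀ i, q (π i) ↔ p i := by
  classical
  have h' : Fintype.card {i // p i} = Fintype.card {i // q i} := by
    simpa [Nat.card_eq_fintype_card] using h
  have hc : Fintype.card {i // ¬ p i} = Fintype.card {i // ¬ q i} := by
    rw [Fintype.card_subtype_compl, Fintype.card_subtype_compl, h']
  let e : {i // p i} ≃ {i // q i} := Fintype.equivOfCardEq h'
  let f : {i // ¬ p i} ≃ {i // ¬ q i} := Fintype.equivOfCardEq hc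
  refine ⟨Equiv.subtypeCongr e f, fun i => ?_⟩
  by_cases hp : p i
  · have : Equiv.subtypeCongr e f i = (e ⟨i, hp⟩ : Fin n) := by
      simp [Equiv.subtypeCongr, hp]
    rw [this]
    exact iff_of_true (e ⟨i, hp⟩).2 hp
  · have : Equiv.subtypeCongr e f i = (f ⟨i, hp⟩ : Fin n) := by
      simp [Equiv.subtypeCongr, hp]
    rw [this]
    exact iff_of_false (f ⟨i, hp⟩).2 hp

/-- Endriss–Grandi: a graph aggregation rule on profiles of `n`
argumentation frameworks over a fixed finite set of arguments `A` is anonymous,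
monotonic and independent iff it is a quota rule, i.e. for each ordered pair `(a,b)`
there is a threshold `t a b ∈ {0,…,n+1}` such that the collective graph contains
`a → b` iff at least `t a b` agents include it. -/
theorem graph_rule_anonymous_monotonic_independent_iff_quota
    (A : Type) [Fintype A] (n : ℕ)
    (F : (Fin n → A → A → Prop) → (A → A → Prop)) :
    ((∀ (AF : Fin n → A → A → Prop) (π : Equiv.Perm (Fin n)) (a b : A),
        F AF a b ↔ F (fun i => AF (π i)) a b) ∧
     (∀ (AF AF' : Fin n → A → A → Prop) (a b : A),
        F AF a b →
        (∀ i, AF i a b → AF' i a b) →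
        (∀ c d, ¬(c = a ∧ d = b) → ∀ i, AF' i c d ↔ AF i c d) →
        F AF' a b) ∧
     (∀ (AF AF' : Fin n → A → A → Prop) (a b : A),
        {i : Fin n | AF i a b} = {i : Fin n | AF' i a b} →
        (F AF a b ↔ F AF' a b)))
    ↔
    (∃ t : A → A → ℕ, (∀ a b, t a b ≤ n + 1) ∧
      ∀ (AF : Fin n → A → A → Prop) (a b : A),
        F AF a b ↔ t a b ≤ Nat.card {i : Fin n // AF i a b}) := by
  classical
  constructor
  · rintro ⟨hanon, hmono, hindep⟩
    -- F depends only on the cardinality of the support set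
    have hcard : ∀ (AF AF' : Fin n → A → A → Prop) (a b : A),
        Nat.card {i // AF' i a b} = Nat.card {i // AF i a b} →
        (F AF a b ↔ F AF' a b) := by
      intro AF AF' a b h
      obtain ⟨π, hπ⟩ := perm_of_card_eq (fun i => AF' i a b) (fun i => AF i a b) h
      exact (hanon AF π a b).trans
        (hindep (fun i => AF (π i)) AF' a b (Set.ext fun i => hπ i))
    -- the canonical profiles
    set CF : ℕ → Fin n → A → A → Prop := fun k i _ _ => (i : ℕ) < k with hCF
    have hcardCF : ∀ k, k ≤ n → Nat.card {i : Fin n // (i : ℕ) < k} = k := by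
      intro k hk
      have e : Fin k ≃ {i : Fin n // (i : ℕ) < k} :=
        ⟨fun j => ⟨⟨j, lt_of_lt_of_le j.2 hk⟩, j.2⟩, fun x => ⟨x.1, x.2⟩,
         fun j => rfl, fun x => rfl⟩
      rw [← Nat.card_congr e]
      simp
    -- monotonicity of the canonical acceptance
    have gmono : ∀ (a b : A) (k m : ℕ), k ≤ m → F (CF k) a b → F (CF m) a b := by
      intro a b k m hkm hFk
      set AF' : Fin n → A → A → Prop :=
        fun i c d => (i : ℕ) < k ∨ ((i : ℕ) < m ∧ c = a ∧ d = b) with hAF'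
      have step1 : F AF' a b :=
        hmono (CF k) AF' a b hFk (fun i hi => Or.inl hi)
          (fun c d hcd i => by simp only [hAF', hCF]; tauto)
      have hsame : ∀ i : Fin n, AF' i a b ↔ CF m i a b := by
        intro i
        simp only [hAF', hCF]
        constructor
        · rintro (h | ⟨h, -⟩)
          · exact lt_of_lt_of_le h hkm
          · exact h
        · intro h; tauto
      have : F AF' a b ↔ F (CF m) a b :=
        hcard AF' (CF m) a b (Nat.card_congr (Equiv.subtypeEquivRight fun i => (hsame i).symm))
      exact this.mp step1
    -- the quota
    have hex : ∀ a b : A, ∃ k, k = n + 1 ∨ F (CF k) a b := fun a b => ⟨n + 1, Or.inl rfl⟩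
    refine ⟨fun a b => Nat.find (hex a b), fun a b => Nat.find_le (Or.inl rfl), ?_⟩
    intro AF a b
    set c := Nat.card {i : Fin n // AF i a b} with hc
    have hcn : c ≤ n := by
      have := Finite.card_subtype_le (fun i : Fin n => AF i a b)
      simp only [Nat.card_eq_fintype_card, Fintype.card_fin] at this
      rw [hc, Nat.card_eq_fintype_card]
      exact this
    have hAFc : F AF a b ↔ F (CF c) a b :=
      hcard AF (CF c) a b (by rw [hcardCF c hcn])
    constructor
    · intro hF
      exact Nat.find_le (Or.inr (hAFc.mp hF))
    · intro hle
      have htc : Nat.find (hex a b) ≤ n := le_trans hle hcn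
      have hspec := Nat.find_spec (hex a b)
      rcases hspec with h | h
      · omega
      · exact hAFc.mpr (gmono a b _ c hle h)
  · rintro ⟨t, ht, hq⟩
    refine ⟨?_, ?_, ?_⟩
    · intro AF π a b
      rw [hq, hq]
      have : Nat.card {i : Fin n // AF (π i) a b} = Nat.card {i : Fin n // AF i a b} :=
        Nat.card_congr (Equiv.subtypeEquiv π fun i => Iff.rfl)
      rw [this]
    · intro AF AF' a b hF hsub _
      rw [hq] at hF ⊢
      refine le_trans hF ?_
      rw [Nat.card_eq_fintype_card, Nat.card_eq_fintype_card]
      exact Fintype.card_subtype_mono _ _ hsub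
    · intro AF AF' a b hset
      rw [hq, hq]
      have : Nat.card {i : Fin n // AF i a b} = Nat.card {i : Fin n // AF' i a b} :=
        Nat.card_congr (Equiv.subtypeEquivRight fun i => Set.ext_iff.mp hset i)
      rw [this]
end

section
/- Any graph aggregation rule that preserves being a defeat graph violates anonymity, monotonicity, or independence. That is, there is no graph aggregation rule that is simultaneously anonymous, monotonic, independent, and such that for every VAF and every profile all of whose members are defeat graphs of that VAF (each induced by some audience), its output is also a defeat graph of that VAF. -/
/-- A graph aggregation rule is anonymous: its output is invariant under
permutations of the agents. -/
def AnonymousGA {A : Type} {n : ℕ} (F : (Fin n → A → A → Prop) → (A → A → Prop)) : Prop :=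
  ∀ (AF : Fin n → A → A → Prop) (π : Equiv.Perm (Fin n)) (a b : A),
    F AF a b ↔ F (fun i => AF (π i)) a b

/-- A graph aggregation rule is monotonic: if `a → b` is collectively accepted and the
profile changes only by additional agents including `a → b`, it is still accepted. -/
def MonotonicGA {A : Type} {n : ℕ} (F : (Fin n → A → A → Prop) → (A → A → Prop)) : Prop :=
  ∀ (AF AF' : Fin n → A → A → Prop) (a b : A),
    F AF a b →
    (∀ i, AF i a b → AF' i a b) →
    (∀ c d, ¬(c = a ∧ d = b) → ∀ i, AF' i c d ↔ AF i c d) →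
    F AF' a b

/-- A graph aggregation rule is independent: acceptance of `a → b` depends only on the
set of agents including `a → b`. -/
def IndependentGA {A : Type} {n : ℕ} (F : (Fin n → A → A → Prop) → (A → A → Prop)) : Prop :=
  ∀ (AF AF' : Fin n → A → A → Prop) (a b : A),
    {i : Fin n | AF i a b} = {i : Fin n | AF' i a b} →
    (F AF a b ↔ F AF' a b)

section Aux

variable (F : ∀ (A : Type) (n : ℕ), (Fin n → A → A → Prop) → (A → A → Prop))

/-- Canonical acceptance of edge (a,b): agent 0 has just this edge, agent 1 has nothing. -/
def Xe (a b : Fin 3) : Prop :=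
  F (Fin 3) 2 (fun i u v => i = 0 ∧ u = a ∧ v = b) a b

lemma key
    (hAnon : ∀ (A : Type) (n : ℕ), AnonymousGA (F A n))
    (hInd : ∀ (A : Type) (n : ℕ), IndependentGA (F A n))
    (hPres : ∀ (A : Type) (n : ℕ) (V : Type) (att : A → A → Prop) (val : A → V)
        (AF : Fin n → A → A → Prop),
        (∀ i, ∃ P : V → V → Prop, IsAudience P ∧ AF i = defeats att val P) →
        ∃ P : V → V → Prop, IsAudience P ∧ F A n AF = defeats att val P)
    (a b c : Fin 3) (hab : a ≠ b) (hbc : b ≠ c) :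
    Xe F a b ↔ ¬ Xe F b c := by
  classical
  set att : Fin 3 → Fin 3 → Prop := fun u v => (u = a ∧ v = b) ∨ (u = b ∧ v = c) with hatt
  set val : Fin 3 → Bool := fun u => decide (u = b) with hval
  set AF : Fin 2 → Fin 3 → Fin 3 → Prop :=
    ![fun u v => u = a ∧ v = b, fun u v => u = b ∧ v = c] with hAF
  have hmem : ∀ i : Fin 2, ∃ P, IsAudience P ∧ AF i = defeats att val P := by
    intro i
    fin_cases i
    · refine ⟨fun u v : Bool => u = false ∧ v = true, ⟨by decide, by decide, by decide⟩, ?_⟩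
      funext u v
      apply propext
      show (u = a ∧ v = b) ↔ _
      constructor
      · rintro ⟨rfl, rfl⟩
        refine ⟨Or.inl ⟨rfl, rfl⟩, ?_⟩
        simp [defeats, hval, hab]
      · rintro ⟨h1 | h2, hnp⟩
        · exact h1
        · exfalso
          obtain ⟨rfl, rfl⟩ := h2
          exact hnp (by simp [hval, Ne.symm hbc])
    · refine ⟨fun u v : Bool => u = true ∧ v = false, ⟨by decide, by decide, by decide⟩, ?_⟩
      funext u v
      apply propext
      show (u = b ∧ v = c) ↔ _
      constructor
      · rintro ⟨rfl, rfl⟩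
        refine ⟨Or.inr ⟨rfl, rfl⟩, ?_⟩
        simp [defeats, hval, Ne.symm hbc]
      · rintro ⟨h1 | h2, hnp⟩
        · exfalso
          obtain ⟨rfl, rfl⟩ := h1
          exact hnp (by simp [hval, hab])
        · exact h2
  obtain ⟨P, hP, hFP⟩ := hPres (Fin 3) 2 Bool att val AF hmem
  have hatleast : P false true ∨ P true false := hP.2.2 false true (by decide)
  have hnotboth : ¬ (P false true ∧ P true false) := by
    rintro ⟨h1, h2⟩
    exact hP.1 false (hP.2.1 _ _ _ h1 h2)
  -- F AF a b is the canonical Xe F a b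
  have hXab : F (Fin 3) 2 AF a b ↔ Xe F a b := by
    apply hInd
    ext i
    fin_cases i <;> simp [hAF, hab]
  -- F AF b c is the canonical Xe F b c, via anonymity (swap) and independence
  have hXbc : F (Fin 3) 2 AF b c ↔ Xe F b c := by
    rw [hAnon (Fin 3) 2 AF (Equiv.swap 0 1) b c]
    apply hInd
    ext i
    fin_cases i <;> simp [hAF, Equiv.swap_apply_left, Equiv.swap_apply_right, Ne.symm hab]
  -- compute the two edges in the output
  have hab' : F (Fin 3) 2 AF a b ↔ ¬ P true false := by
    rw [hFP]
    show (((a = a ∧ b = b) ∨ (a = b ∧ b = c)) ∧ ¬ P (val b) (val a)) ↔ _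
    simp [hval, hab]
  have hbc' : F (Fin 3) 2 AF b c ↔ ¬ P false true := by
    rw [hFP]
    show (((b = a ∧ c = b) ∨ (b = b ∧ c = c)) ∧ ¬ P (val c) (val b)) ↔ _
    simp [hval, Ne.symm hbc]
  rw [← hXab, ← hXbc, hab', hbc']
  tauto

end Aux

/-- there is no (family of) graph aggregation rule(s) that is anonymous,
monotonic, independent, and preserves being a defeat graph: whenever all graphs in the
input profile are defeat graphs of a given VAF (each induced by some audience), the
output is also a defeat graph of that VAF induced by some audience. -/
theorem no_anonymous_monotonic_independent_rule_preserves_defeat_graphs :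
    ¬ ∃ F : ∀ (A : Type) (n : ℕ), (Fin n → A → A → Prop) → (A → A → Prop),
        (∀ (A : Type) (n : ℕ), AnonymousGA (F A n)) ∧
        (∀ (A : Type) (n : ℕ), MonotonicGA (F A n)) ∧
        (∀ (A : Type) (n : ℕ), IndependentGA (F A n)) ∧
        (∀ (A : Type) (n : ℕ) (V : Type) (att : A → A → Prop) (val : A → V)
            (AF : Fin n → A → A → Prop),
            (∀ i, ∃ P : V → V → Prop, IsAudience P ∧ AF i = defeats att val P) →
            ∃ P : V → V → Prop, IsAudience P ∧ F A n AF = defeats att val P) := by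
  rintro ⟨F, hAnon, hMono, hInd, hPres⟩
  have k1 := key F hAnon hInd hPres 0 1 2 (by decide) (by decide)
  have k2 := key F hAnon hInd hPres 1 2 0 (by decide) (by decide)
  have k3 := key F hAnon hInd hPres 2 0 1 (by decide) (by decide)
  tauto
end

section
/- (Arrow's impossibility theorem for strict linear orders.) Let V be a set of alternatives with |V| ≥ 3 and let F be a preference aggregation rule mapping profiles of n strict linear orders on V to a strict linear order on V. If F is unanimous (whenever all agents rank v above w, so does F's output) and independent (the relative ranking of any pair v, w in the output depends only on the set of agents ranking v above w), then F is dictatorial: there is an agent i such that F(P) = P_i for every profile P. -/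
open scoped Classical

/-- Build a strict linear order from a rank function, breaking ties with a base order. -/
def mkord {V : Type} (R0 : V → V → Prop) (r : V → ℕ) : V → V → Prop :=
  fun a b => r a < r b ∨ (r a = r b ∧ R0 a b)

lemma mkord_audience {V : Type} (R0 : V → V → Prop) (h : IsAudience R0) (r : V → ℕ) :
    IsAudience (mkord R0 r) := by
  obtain ⟨hirr, htr, htot⟩ := h
  refine ⟨?_, ?_, ?_⟩
  · intro v hv
    rcases hv with h | ⟨_, h⟩
    · omega
    · exact hirr v h
  · rintro u v w (h1 | ⟨e1, h1⟩) (h2 | ⟨e2, h2⟩)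
    · exact Or.inl (h1.trans h2)
    · exact Or.inl (e2 ▸ h1)
    · exact Or.inl (e1 ▸ h2)
    · exact Or.inr ⟨e1.trans e2, htr _ _ _ h1 h2⟩
  · intro v w hvw
    rcases Nat.lt_trichotomy (r v) (r w) with h | h | h
    · exact Or.inl (Or.inl h)
    · rcases htot v w hvw with h' | h'
      · exact Or.inl (Or.inr ⟨h, h'⟩)
      · exact Or.inr (Or.inr ⟨h.symm, h'⟩)
    · exact Or.inr (Or.inl h)

/-- Rank function putting `x` above `y` above everything else. -/
noncomputable def rk2 {V : Type} (x y : V) : V → ℕ :=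
  fun a => if a = x then 0 else if a = y then 1 else 2

/-- Rank function putting `x` above `y` above `z` above everything else. -/
noncomputable def rk3 {V : Type} (x y z : V) : V → ℕ :=
  fun a => if a = x then 0 else if a = y then 1 else if a = z then 2 else 3

/-- Arrow's impossibility theorem for strict linear orders: with at
least 3 alternatives, any preference aggregation rule (mapping profiles of strict
linear orders to a strict linear order) that is unanimous and independent is
dictatorial. -/
theorem arrow_impossibility_strict_linear_orders
    (V : Type) (v₁ v₂ v₃ : V) (h₁₂ : v₁ ≠ v₂) (h₁₃ : v₁ ≠ v₃) (h₂₃ : v₂ ≠ v₃)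
    (n : ℕ)
    (F : (Fin n → V → V → Prop) → (V → V → Prop))
    (hF : ∀ P : Fin n → V → V → Prop, (∀ i, IsAudience (P i)) → IsAudience (F P))
    (hUnanimous : ∀ P : Fin n → V → V → Prop, (∀ i, IsAudience (P i)) →
      ∀ v w, (∀ i, P i v w) → F P v w)
    (hIndependent : ∀ P P' : Fin n → V → V → Prop,
      (∀ i, IsAudience (P i)) → (∀ i, IsAudience (P' i)) →
      ∀ v w, {i : Fin n | P i v w} = {i : Fin n | P' i v w} → (F P v w ↔ F P' v w)) :
    ∃ i : Fin n, ∀ P : Fin n → V → V → Prop, (∀ j, IsAudience (P j)) → F P = P i := by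
  classical
  -- a base audience on V
  set R0 : V → V → Prop := @WellOrderingRel V with hR0
  have hR0aud : IsAudience R0 :=
    ⟨fun v => irrefl v, fun u v w h1 h2 => _root_.trans h1 h2,
     fun v w hvw => (trichotomous v w).elim Or.inl (fun h => h.elim (fun h => absurd h hvw) Or.inr)⟩
  have mkaud : ∀ r : V → ℕ, IsAudience (mkord R0 r) := mkord_audience R0 hR0aud
  -- asymmetry / completeness facts for audiences
  have aud_asymm : ∀ (Q : V → V → Prop), IsAudience Q → ∀ a b, Q a b → ¬ Q b a := by
    intro Q hQ a b h1 h2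
    exact hQ.1 a (hQ.2.1 a b a h1 h2)
  have aud_not_iff : ∀ (Q : V → V → Prop), IsAudience Q → ∀ a b, a ≠ b → (¬ Q a b ↔ Q b a) := by
    intro Q hQ a b hab
    constructor
    · intro h
      rcases hQ.2.2 a b hab with h' | h'
      · exact absurd h' h
      · exact h'
    · exact fun h' h => aud_asymm Q hQ b a h' h
  -- the canonical two-element profile
  set Pb : V → V → Set (Fin n) → (Fin n → V → V → Prop) :=
    fun x y S i => if i ∈ S then mkord R0 (rk2 x y) else mkord R0 (rk2 y x) with hPbdef
  have hPbaud : ∀ x y S i, IsAudience (Pb x y S i) := by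
    intro x y S i
    simp only [hPbdef]
    split <;> exact mkaud _
  have hPbset : ∀ x y (S : Set (Fin n)), x ≠ y → {i | Pb x y S i x y} = S := by
    intro x y S hxy
    ext i
    by_cases hi : i ∈ S <;>
      simp [hPbdef, hi, mkord, rk2, hxy, Ne.symm hxy]
  -- the decisiveness predicate
  set dec : V → V → Set (Fin n) → Prop := fun x y S => F (Pb x y S) x y with hdecdef
  have decIff : ∀ (P : Fin n → V → V → Prop), (∀ i, IsAudience (P i)) →
      ∀ x y (S : Set (Fin n)), x ≠ y → {i | P i x y} = S → (F P x y ↔ dec x y S) := by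
    intro P hP x y S hxy hS
    exact hIndependent P (Pb x y S) hP (hPbaud x y S) x y (by rw [hS, hPbset x y S hxy])
  -- decisiveness of univ (unanimity)
  have decUniv : ∀ x y : V, x ≠ y → dec x y Set.univ := by
    intro x y hxy
    apply hUnanimous _ (hPbaud x y Set.univ)
    intro i
    have : i ∈ ({j | Pb x y Set.univ j x y} : Set (Fin n)) := by
      rw [hPbset x y Set.univ hxy]; trivial
    exact this
  -- decisiveness fails for the empty coalition
  have decEmpty : ∀ x y : V, x ≠ y → ¬ dec x y (∅ : Set (Fin n)) := by
    intro x y hxy hd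
    have hyx : F (Pb x y ∅) y x := by
      apply hUnanimous _ (hPbaud x y ∅)
      intro i
      have hi : i ∉ ({j | Pb x y ∅ j x y} : Set (Fin n)) := by
        rw [hPbset x y ∅ hxy]; exact fun h => h
      have := (aud_not_iff _ (hPbaud x y ∅ i) x y hxy).mp hi
      exact this
    exact aud_asymm _ (hF _ (hPbaud x y ∅)) x y hd hyx
  -- complement law
  have decCompl : ∀ x y (S : Set (Fin n)), x ≠ y → (¬ dec x y S ↔ dec y x Sᶜ) := by
    intro x y S hxy
    have hset : {i | Pb x y S i y x} = Sᶜ := by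
      ext i
      have := aud_not_iff _ (hPbaud x y S i) x y hxy
      have h2 : (i ∈ {j | Pb x y S j x y}) ↔ i ∈ S := by rw [hPbset x y S hxy]
      simp only [Set.mem_setOf_eq, Set.mem_compl_iff] at *
      rw [← h2, ← this]
    have key := decIff (Pb x y S) (hPbaud x y S) y x Sᶜ (Ne.symm hxy) hset
    rw [← key]
    exact (aud_not_iff _ (hF _ (hPbaud x y S)) x y hxy)
  -- intersection law
  have decInter : ∀ x y z (S T : Set (Fin n)), x ≠ y → x ≠ z → y ≠ z →
      dec x y S → dec y z T → dec x z (S ∩ T) := by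
    intro x y z S T hxy hxz hyz hS hT
    set P : Fin n → V → V → Prop := fun i =>
      mkord R0 (if i ∈ S then (if i ∈ T then rk3 x y z else rk3 z x y)
                else (if i ∈ T then rk3 y z x else rk3 z y x)) with hPdef
    have hP : ∀ i, IsAudience (P i) := fun i => mkaud _
    have e1 : {i | P i x y} = S := by
      ext i
      by_cases hiS : i ∈ S <;> by_cases hiT : i ∈ T <;>
        simp [hPdef, hiS, hiT, mkord, rk3, hxy, hxz, hyz, Ne.symm hxy, Ne.symm hxz, Ne.symm hyz]
    have e2 : {i | P i y z} = T := by
      ext i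
      by_cases hiS : i ∈ S <;> by_cases hiT : i ∈ T <;>
        simp [hPdef, hiS, hiT, mkord, rk3, hxy, hxz, hyz, Ne.symm hxy, Ne.symm hxz, Ne.symm hyz]
    have e3 : {i | P i x z} = S ∩ T := by
      ext i
      by_cases hiS : i ∈ S <;> by_cases hiT : i ∈ T <;>
        simp [hPdef, hiS, hiT, mkord, rk3, hxy, hxz, hyz, Ne.symm hxy, Ne.symm hxz, Ne.symm hyz]
    have f1 : F P x y := (decIff P hP x y S hxy e1).mpr hS
    have f2 : F P y z := (decIff P hP y z T hyz e2).mpr hT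
    have f3 : F P x z := (hF P hP).2.1 x y z f1 f2
    exact (decIff P hP x z (S ∩ T) hxz e3).mp f3
  -- change-first and change-second moves
  have move1 : ∀ a b c (S : Set (Fin n)), a ≠ b → c ≠ b → c ≠ a →
      dec a b S → dec c b S := by
    intro a b c S hab hcb hca h
    have := decInter c a b Set.univ S hca hcb hab (decUniv c a hca) h
    rwa [Set.univ_inter] at this
  have move2 : ∀ a b d (S : Set (Fin n)), a ≠ b → b ≠ d → a ≠ d →
      dec a b S → dec a d S := by
    intro a b d S hab hbd had h
    have := decInter a b d S Set.univ hab had hbd h (decUniv b d hbd)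
    rwa [Set.inter_univ] at this
  -- a helper element distinct from two given ones
  have helper : ∀ a b : V, ∃ e : V, e ≠ a ∧ e ≠ b := by
    intro a b
    rcases eq_or_ne v₁ a with rfl | h1a
    · rcases eq_or_ne v₂ b with rfl | h2b
      · exact ⟨v₃, Ne.symm h₁₃, Ne.symm h₂₃⟩
      · exact ⟨v₂, Ne.symm h₁₂, h2b⟩
    · rcases eq_or_ne v₁ b with rfl | h1b
      · rcases eq_or_ne v₂ a with rfl | h2a
        · exact ⟨v₃, Ne.symm h₂₃, Ne.symm h₁₃⟩
        · exact ⟨v₂, h2a, Ne.symm h₁₂⟩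
      · exact ⟨v₁, h1a, h1b⟩
  -- full neutrality
  have neutral : ∀ a b c d (S : Set (Fin n)), a ≠ b → c ≠ d →
      dec a b S → dec c d S := by
    intro a b c d S hab hcd h
    by_cases hac : a = c
    · subst hac
      by_cases hbd : b = d
      · subst hbd; exact h
      · exact move2 a b d S hab hbd hcd h
    · by_cases hbd : b = d
      · subst hbd
        exact move1 a b c S hab hcd (Ne.symm hac) h
      · by_cases had : a = d
        · subst had
          -- target (c, a), with c ≠ a
          have hca : c ≠ a := Ne.symm hac
          by_cases hcb : c = b
          · subst hcb
            -- swap: dec a c S → dec c a S, via a helper e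
            obtain ⟨e, hea, heb⟩ := helper a c
            have s1 : dec e c S := move1 a c e S hab heb hea h
            have s2 : dec e a S := move2 e c a S heb (Ne.symm hab) hea s1
            exact move1 e a c S hea hca (Ne.symm heb) s2
          · have s1 : dec c b S := move1 a b c S hab hcb (Ne.symm hac) h
            exact move2 c b a S hcb (Ne.symm hab) hca s1
        · have s1 : dec a d S := move2 a b d S hab hbd had h
          exact move1 a d c S had hcd (Ne.symm hac) s1
  -- intersection within the fixed pair (v₁, v₂)
  have interU : ∀ S T : Set (Fin n), dec v₁ v₂ S → dec v₁ v₂ T → dec v₁ v₂ (S ∩ T) := by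
    intro S T hS hT
    have hT' : dec v₂ v₃ T := neutral v₁ v₂ v₂ v₃ T h₁₂ h₂₃ hT
    have := decInter v₁ v₂ v₃ S T h₁₂ h₁₃ h₂₃ hS hT'
    exact neutral v₁ v₃ v₁ v₂ (S ∩ T) h₁₃ h₁₂ this
  -- there is a dictator coalition {i}
  have exdict : ∃ i : Fin n, dec v₁ v₂ {i} := by
    by_contra hno
    push_neg at hno
    have hcompl : ∀ i : Fin n, dec v₁ v₂ ({i}ᶜ) := by
      intro i
      have := (decCompl v₁ v₂ {i} h₁₂).mp (hno i)
      exact neutral v₂ v₁ v₁ v₂ _ (Ne.symm h₁₂) h₁₂ this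
    have key : ∀ s : Finset (Fin n), dec v₁ v₂ {i | i ∉ s} := by
      intro s
      induction s using Finset.induction_on with
      | empty => simpa using decUniv v₁ v₂ h₁₂
      | @insert j t hj ih =>
        have := interU _ _ ih (hcompl j)
        have hset : ({i | i ∉ t} ∩ ({j}ᶜ) : Set (Fin n)) = {i | i ∉ insert j t} := by
          ext i
          simp [Finset.mem_insert, and_comm, not_or]
        rwa [hset] at this
    have := key Finset.univ
    have hempty : ({i : Fin n | i ∉ Finset.univ} : Set (Fin n)) = ∅ := by
      ext i; simp
    rw [hempty] at this
    exact decEmpty v₁ v₂ h₁₂ this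
  obtain ⟨i, hi⟩ := exdict
  -- membership characterization
  have memIff : ∀ S : Set (Fin n), dec v₁ v₂ S ↔ i ∈ S := by
    intro S
    constructor
    · intro hS
      by_contra hiS
      have := interU _ _ hi hS
      have hset : ({i} ∩ S : Set (Fin n)) = ∅ := by
        ext j; simp only [Set.mem_inter_iff, Set.mem_singleton_iff, Set.mem_empty_iff_false,
          iff_false, not_and]
        rintro rfl; exact hiS
      rw [hset] at this
      exact decEmpty v₁ v₂ h₁₂ this
    · intro hiS
      by_contra hS
      have hc := (decCompl v₁ v₂ S h₁₂).mp hS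
      have hc' : dec v₁ v₂ Sᶜ := neutral v₂ v₁ v₁ v₂ _ (Ne.symm h₁₂) h₁₂ hc
      have := interU _ _ hi hc'
      have hset : ({i} ∩ Sᶜ : Set (Fin n)) = ∅ := by
        ext j; simp only [Set.mem_inter_iff, Set.mem_singleton_iff, Set.mem_compl_iff,
          Set.mem_empty_iff_false, iff_false, not_and]
        rintro rfl; exact fun h => h hiS
      rw [hset] at this
      exact decEmpty v₁ v₂ h₁₂ this
  -- conclude: i is a dictator
  refine ⟨i, ?_⟩
  intro P hP
  funext a b
  apply propext
  by_cases hab : a = b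
  · subst hab
    constructor
    · intro h; exact absurd h ((hF P hP).1 a)
    · intro h; exact absurd h ((hP i).1 a)
  · have key := decIff P hP a b {j | P j a b} hab rfl
    constructor
    · intro h
      have hd : dec a b {j | P j a b} := key.mp h
      have hd' : dec v₁ v₂ {j | P j a b} := neutral a b v₁ v₂ _ hab h₁₂ hd
      exact (memIff _).mp hd'
    · intro h
      have hd' : dec v₁ v₂ {j | P j a b} := (memIff _).mpr h
      have hd : dec a b {j | P j a b} := neutral v₁ v₂ a b _ h₁₂ hab hd'
      exact key.mpr hd
end

section
/- Let A be a set of at least 3 arguments and let F be a graph aggregation rule defined on justifiable profiles of argumentation frameworks on A that preserves being a defeat graph (with respect to VAFs with at least 3 values). Then F is not independent, is not unanimous, or is dictatorial. -/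
/-- A profile of argumentation frameworks is justifiable if there is a single VAF
(an attack relation and a value labelling) such that every member of the profile is a
defeat graph of that VAF induced by some audience. -/
def JustifiableProfile {A : Type} {n : ℕ} (AF : Fin n → A → A → Prop) : Prop :=
  ∃ (V : Type) (att : A → A → Prop) (val : A → V),
    ∀ i, ∃ P : V → V → Prop, IsAudience P ∧ AF i = defeats att val P

namespace ArrowVAF

set_option linter.unusedSectionVars false

open Classical

/-- audience from a score function -/
def audOf (s : Fin 3 → ℕ) : Fin 3 → Fin 3 → Prop := fun u v => s v < s u

lemma audOf_isAudience {s : Fin 3 → ℕ} (hs : Function.Injective s) : IsAudience (audOf s) := by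
  refine ⟨fun v => lt_irrefl _, fun u v w h1 h2 => h2.trans h1, fun v w hvw => ?_⟩
  rcases lt_or_gt_of_ne (fun h : s v = s w => hvw (hs h)) with h | h
  · exact Or.inr h
  · exact Or.inl h

lemma aud_asymm {V : Type} {P : V → V → Prop} (h : IsAudience P) {x y : V} :
    P x y → ¬ P y x := fun h1 h2 => h.1 x (h.2.1 x y x h1 h2)


lemma aud_nP_trans {V : Type} {P : V → V → Prop} (h : IsAudience P) {x y z : V}
    (hxy : x ≠ y) (hyz : y ≠ z) (h1 : ¬ P y x) (h2 : ¬ P z y) : ¬ P z x := by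
  have hxy' : P x y := (h.2.2 x y hxy).resolve_right (fun hc => h1 hc)
  have hyz' : P y z := (h.2.2 y z hyz).resolve_right (fun hc => h2 hc)
  exact aud_asymm h (h.2.1 x y z hxy' hyz')

variable {A : Type} {n : ℕ}

/-- two-argument VAF used to define `Win` -/
def pairAtt (u v : A) : A → A → Prop := fun a b => (a = u ∧ b = v) ∨ (a = v ∧ b = u)

noncomputable def pairVal (u : A) : A → Fin 3 := fun a => if a = u then 0 else 1

def pairScore (C : Finset (Fin n)) : Fin n → Fin 3 → ℕ :=
  fun i => if i ∈ C then ![1,0,2] else ![0,1,2]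

lemma pairScore_inj (C : Finset (Fin n)) (i : Fin n) :
    Function.Injective (pairScore C i) := by
  unfold pairScore; split <;> decide

noncomputable def pairProf (u v : A) (C : Finset (Fin n)) : Fin n → A → A → Prop :=
  fun i => defeats (pairAtt u v) (pairVal u) (audOf (pairScore C i))

lemma pairProf_just (u v : A) (C : Finset (Fin n)) : JustifiableProfile (pairProf u v C) :=
  ⟨Fin 3, pairAtt u v, pairVal u,
    fun i => ⟨audOf (pairScore C i), audOf_isAudience (pairScore_inj C i), rfl⟩⟩

lemma pairProf_edge_uv {u v : A} (huv : u ≠ v) (C : Finset (Fin n)) (i : Fin n) :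
    pairProf u v C i u v ↔ i ∈ C := by
  unfold pairProf defeats pairAtt pairVal audOf pairScore
  simp only [if_pos rfl, if_neg (Ne.symm huv)]
  by_cases h : i ∈ C <;> simp [h]

lemma pairProf_edge_vu {u v : A} (huv : u ≠ v) (C : Finset (Fin n)) (i : Fin n) :
    pairProf u v C i v u ↔ i ∉ C := by
  unfold pairProf defeats pairAtt pairVal audOf pairScore
  simp only [if_pos rfl, if_neg (Ne.symm huv)]
  by_cases h : i ∈ C <;> simp [h]

/-- triple VAF -/
def tAtt (p q r : A) : A → A → Prop :=
  fun a b => a ≠ b ∧ (a = p ∨ a = q ∨ a = r) ∧ (b = p ∨ b = q ∨ b = r)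

noncomputable def tVal (p q : A) : A → Fin 3 := fun a => if a = p then 0 else if a = q then 1 else 2

noncomputable def tProf (p q r : A) (s : Fin n → Fin 3 → ℕ) : Fin n → A → A → Prop :=
  fun i => defeats (tAtt p q r) (tVal p q) (audOf (s i))

lemma tProf_just (p q r : A) {s : Fin n → Fin 3 → ℕ}
    (hs : ∀ i, Function.Injective (s i)) : JustifiableProfile (tProf p q r s) :=
  ⟨Fin 3, tAtt p q r, tVal p q,
    fun i => ⟨audOf (s i), audOf_isAudience (hs i), rfl⟩⟩

lemma tVal_p (p q : A) : tVal p q p = 0 := if_pos rfl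

lemma tVal_q {p q : A} (h : p ≠ q) : tVal p q q = 1 := by
  unfold tVal; rw [if_neg (Ne.symm h), if_pos rfl]

lemma tVal_r {p q r : A} (h1 : p ≠ r) (h2 : q ≠ r) : tVal p q r = 2 := by
  unfold tVal; rw [if_neg (Ne.symm h1), if_neg (Ne.symm h2)]

lemma tProf_edge {p q r u v : A} (hu : u = p ∨ u = q ∨ u = r) (hv : v = p ∨ v = q ∨ v = r)
    (huv : u ≠ v) {s : Fin n → Fin 3 → ℕ} (i : Fin n) (hs : Function.Injective (s i))
    (hval : tVal p q u ≠ tVal p q v) :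
    tProf p q r s i u v ↔ s i (tVal p q v) < s i (tVal p q u) := by
  unfold tProf defeats audOf
  have h1 : s i (tVal p q u) ≠ s i (tVal p q v) := fun h => hval (hs h)
  constructor
  · rintro ⟨-, h2⟩; omega
  · intro h2; exact ⟨⟨huv, hu, hv⟩, by omega⟩

/-- the social edge, given by F, for the defeat-graph of a triple VAF -/
lemma defeats_edge {u v p q r : A} {P : Fin 3 → Fin 3 → Prop}
    (hu : u = p ∨ u = q ∨ u = r) (hv : v = p ∨ v = q ∨ v = r) (huv : u ≠ v) :
    defeats (tAtt p q r) (tVal p q) P u v ↔ ¬ P (tVal p q v) (tVal p q u) :=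
  and_iff_right ⟨huv, hu, hv⟩


section Rule

variable (F : (Fin n → A → A → Prop) → (A → A → Prop))

def Pres : Prop :=
  ∀ (V : Type) (v₁ v₂ v₃ : V), v₁ ≠ v₂ → v₁ ≠ v₃ → v₂ ≠ v₃ →
      ∀ (att : A → A → Prop) (val : A → V) (AF : Fin n → A → A → Prop),
        (∀ i, ∃ P : V → V → Prop, IsAudience P ∧ AF i = defeats att val P) →
        ∃ P : V → V → Prop, IsAudience P ∧ F AF = defeats att val P

def Indep : Prop :=
  ∀ (AF AF' : Fin n → A → A → Prop),
      JustifiableProfile AF → JustifiableProfile AF' →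
      ∀ a b, {i : Fin n | AF i a b} = {i : Fin n | AF' i a b} →
        (F AF a b ↔ F AF' a b)

def Unanim : Prop :=
  ∀ AF : Fin n → A → A → Prop, JustifiableProfile AF →
      ∀ a b, (∀ i, AF i a b) → F AF a b

noncomputable def Win (u v : A) (C : Finset (Fin n)) : Prop := F (pairProf u v C) u v

/-- a coalition is decisive -/
def Dec (C : Finset (Fin n)) : Prop :=
  ∀ u v : A, u ≠ v → ∀ C', C ⊆ C' → Win F u v C'

variable {F}

lemma F_iff_win (hI : Indep F) {AF : Fin n → A → A → Prop} (hJ : JustifiableProfile AF)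
    {u v : A} {C : Finset (Fin n)} (huv : u ≠ v) (hset : ∀ i, AF i u v ↔ i ∈ C) :
    F AF u v ↔ Win F u v C :=
  hI AF (pairProf u v C) hJ (pairProf_just u v C) u v
    (Set.ext fun i => (hset i).trans (pairProf_edge_uv huv C i).symm)

lemma win_pair (hP : Pres F) (hI : Indep F) {u v : A} (huv : u ≠ v) (C : Finset (Fin n)) :
    Win F u v C ↔ ¬ Win F v u Cᶜ := by
  obtain ⟨P, hPaud, hF⟩ := hP (Fin 3) 0 1 2 (by decide) (by decide) (by decide)
    (pairAtt u v) (pairVal u) (pairProf u v C)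
    (fun i => ⟨_, audOf_isAudience (pairScore_inj C i), rfl⟩)
  have e1 : Win F u v C ↔ ¬ P (pairVal u v) (pairVal u u) := by
    show F (pairProf u v C) u v ↔ _
    rw [hF]; exact and_iff_right (Or.inl ⟨rfl, rfl⟩)
  have e2 : F (pairProf u v C) v u ↔ ¬ P (pairVal u u) (pairVal u v) := by
    rw [hF]; exact and_iff_right (Or.inr ⟨rfl, rfl⟩)
  have e3 : F (pairProf u v C) v u ↔ Win F v u Cᶜ :=
    F_iff_win hI (pairProf_just u v C) (Ne.symm huv)
      (fun i => (pairProf_edge_vu huv C i).trans (Finset.mem_compl).symm)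
  have hvv : pairVal u v = 1 := if_neg (Ne.symm huv)
  have huu : pairVal u u = (0 : Fin 3) := if_pos rfl
  rw [e1, ← e3, e2, hvv, huu]
  have ht := hPaud.2.2 0 1 (by decide)
  have ha : P 0 1 → ¬ P 1 0 := aud_asymm hPaud
  tauto

lemma win_univ (hU : Unanim F) {u v : A} (huv : u ≠ v) : Win F u v Finset.univ :=
  hU (pairProf u v Finset.univ) (pairProf_just u v _) u v
    (fun i => (pairProf_edge_uv huv _ i).mpr (Finset.mem_univ i))


lemma stepA (hP : Pres F) (hI : Indep F) (hU : Unanim F)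
    {p q r : A} (hpq : p ≠ q) (hpr : p ≠ r) (hqr : q ≠ r)
    {C C' : Finset (Fin n)} (hCC' : C ⊆ C') (h : Win F p q C) : Win F p r C' := by
  classical
  set s : Fin n → Fin 3 → ℕ :=
    fun i => if i ∈ C then ![2,1,0] else if i ∈ C' then ![1,2,0] else ![0,2,1] with hs_def
  have hsinj : ∀ i, Function.Injective (s i) := by
    intro i; simp only [hs_def]; split_ifs <;> decide
  have hJ := tProf_just p q r hsinj
  have hup : p = p ∨ p = q ∨ p = r := Or.inl rfl
  have huq : q = p ∨ q = q ∨ q = r := Or.inr (Or.inl rfl)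
  have hur : r = p ∨ r = q ∨ r = r := Or.inr (Or.inr rfl)
  have v0 := tVal_p p q
  have v1 := tVal_q hpq
  have v2 := tVal_r hpr hqr
  have epq : ∀ i, tProf p q r s i p q ↔ i ∈ C := by
    intro i
    rw [tProf_edge hup huq hpq i (hsinj i) (by rw [v0, v1]; decide), v0, v1]
    simp only [hs_def]
    split_ifs with h1 h2
    · simp [h1]
    · simp [h1]
    · simp [h1]
  have hFpq : F (tProf p q r s) p q := (F_iff_win hI hJ hpq epq).mpr h
  have eqr : ∀ i, tProf p q r s i q r := by
    intro i
    rw [tProf_edge huq hur hqr i (hsinj i) (by rw [v1, v2]; decide), v1, v2]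
    simp only [hs_def]
    split_ifs <;> decide
  have hFqr : F (tProf p q r s) q r := hU _ hJ q r eqr
  obtain ⟨P, hPaud, hF⟩ := hP (Fin 3) 0 1 2 (by decide) (by decide) (by decide)
    (tAtt p q r) (tVal p q) (tProf p q r s)
    (fun i => ⟨audOf (s i), audOf_isAudience (hsinj i), rfl⟩)
  have hFpr : F (tProf p q r s) p r := by
    rw [hF] at hFpq hFqr ⊢
    rw [defeats_edge hup huq hpq, v0, v1] at hFpq
    rw [defeats_edge huq hur hqr, v1, v2] at hFqr
    rw [defeats_edge hup hur hpr, v0, v2]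
    exact aud_nP_trans hPaud (by decide) (by decide) hFpq hFqr
  have epr : ∀ i, tProf p q r s i p r ↔ i ∈ C' := by
    intro i
    rw [tProf_edge hup hur hpr i (hsinj i) (by rw [v0, v2]; decide), v0, v2]
    simp only [hs_def]
    split_ifs with h1 h2
    · simp [hCC' h1]
    · simp [h2]
    · simp [h2]
  exact (F_iff_win hI hJ hpr epr).mp hFpr

lemma stepA' (hP : Pres F) (hI : Indep F) (hU : Unanim F)
    {p q r : A} (hpq : p ≠ q) (hpr : p ≠ r) (hqr : q ≠ r)
    {C C' : Finset (Fin n)} (hCC' : C ⊆ C') (h : Win F p q C) : Win F r q C' := by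
  classical
  set s : Fin n → Fin 3 → ℕ :=
    fun i => if i ∈ C then ![1,0,2] else if i ∈ C' then ![0,1,2] else ![0,2,1] with hs_def
  have hsinj : ∀ i, Function.Injective (s i) := by
    intro i; simp only [hs_def]; split_ifs <;> decide
  have hJ := tProf_just p q r hsinj
  have hup : p = p ∨ p = q ∨ p = r := Or.inl rfl
  have huq : q = p ∨ q = q ∨ q = r := Or.inr (Or.inl rfl)
  have hur : r = p ∨ r = q ∨ r = r := Or.inr (Or.inr rfl)
  have v0 := tVal_p p q
  have v1 := tVal_q hpq
  have v2 := tVal_r hpr hqr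
  have epq : ∀ i, tProf p q r s i p q ↔ i ∈ C := by
    intro i
    rw [tProf_edge hup huq hpq i (hsinj i) (by rw [v0, v1]; decide), v0, v1]
    simp only [hs_def]
    split_ifs with h1 h2
    · simp [h1]
    · simp [h1]
    · simp [h1]
  have hFpq : F (tProf p q r s) p q := (F_iff_win hI hJ hpq epq).mpr h
  have erp : ∀ i, tProf p q r s i r p := by
    intro i
    rw [tProf_edge hur hup (Ne.symm hpr) i (hsinj i) (by rw [v0, v2]; decide), v0, v2]
    simp only [hs_def]
    split_ifs <;> decide
  have hFrp : F (tProf p q r s) r p := hU _ hJ r p erp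
  obtain ⟨P, hPaud, hF⟩ := hP (Fin 3) 0 1 2 (by decide) (by decide) (by decide)
    (tAtt p q r) (tVal p q) (tProf p q r s)
    (fun i => ⟨audOf (s i), audOf_isAudience (hsinj i), rfl⟩)
  have hFrq : F (tProf p q r s) r q := by
    rw [hF] at hFpq hFrp ⊢
    rw [defeats_edge hup huq hpq, v0, v1] at hFpq
    rw [defeats_edge hur hup (Ne.symm hpr), v0, v2] at hFrp
    rw [defeats_edge hur huq (Ne.symm hqr), v1, v2]
    exact aud_nP_trans hPaud (by decide) (by decide) hFrp hFpq
  have erq : ∀ i, tProf p q r s i r q ↔ i ∈ C' := by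
    intro i
    rw [tProf_edge hur huq (Ne.symm hqr) i (hsinj i) (by rw [v1, v2]; decide), v1, v2]
    simp only [hs_def]
    split_ifs with h1 h2
    · simp [hCC' h1]
    · simp [h2]
    · simp [h2]
  exact (F_iff_win hI hJ (Ne.symm hqr) erq).mp hFrq


lemma third {x y z : A} (hxy : x ≠ y) (hxz : x ≠ z) (hyz : y ≠ z) (p q : A) :
    ∃ r, r ≠ p ∧ r ≠ q := by
  by_cases h1 : x ≠ p ∧ x ≠ q
  · exact ⟨x, h1⟩
  by_cases h2 : y ≠ p ∧ y ≠ q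
  · exact ⟨y, h2⟩
  by_cases h3 : z ≠ p ∧ z ≠ q
  · exact ⟨z, h3⟩
  exfalso
  have hx : x = p ∨ x = q := by tauto
  have hy : y = p ∨ y = q := by tauto
  have hz : z = p ∨ z = q := by tauto
  rcases hx with hx | hx <;> rcases hy with hy | hy <;> rcases hz with hz | hz <;>
    subst_vars <;> simp_all

variable {x y z : A} (hxy : x ≠ y) (hxz : x ≠ z) (hyz : y ≠ z)

include hxy hxz hyz

lemma FE (hP : Pres F) (hI : Indep F) (hU : Unanim F)
    {p q : A} {C : Finset (Fin n)} (hpq : p ≠ q) (h : Win F p q C) : Dec F C := by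
  have hpw : ∀ w, w ≠ p → w ≠ q → ∀ C', C ⊆ C' → Win F p w C' :=
    fun w hwp hwq C' hs => stepA hP hI hU hpq (Ne.symm hwp) (Ne.symm hwq) hs h
  have hpq' : ∀ C', C ⊆ C' → Win F p q C' := by
    obtain ⟨r, hrp, hrq⟩ := third hxy hxz hyz p q
    intro C' hs
    have h1 : Win F p r C := hpw r hrp hrq C (subset_refl C)
    exact stepA hP hI hU (Ne.symm hrp) hpq hrq hs h1
  have hpAll : ∀ w, w ≠ p → ∀ C', C ⊆ C' → Win F p w C' := by
    intro w hwp C' hs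
    by_cases hwq : w = q
    · subst hwq; exact hpq' C' hs
    · exact hpw w hwp hwq C' hs
  have hAway : ∀ u w, u ≠ p → w ≠ p → u ≠ w → ∀ C', C ⊆ C' → Win F u w C' := by
    intro u w hupne hwp huw C' hs
    have h1 : Win F p w C := hpAll w hwp C (subset_refl C)
    exact stepA' hP hI hU (Ne.symm hwp) (Ne.symm hupne) (Ne.symm huw) hs h1
  have hup : ∀ u, u ≠ p → ∀ C', C ⊆ C' → Win F u p C' := by
    intro u hu C' hs
    obtain ⟨r, hru, hrp⟩ := third hxy hxz hyz u p
    have h1 : Win F u r C := hAway u r hu hrp (Ne.symm hru) C (subset_refl C)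
    exact stepA hP hI hU (Ne.symm hru) hu (hrp) hs h1
  intro u v huv C' hs
  by_cases hU1 : u = p
  · subst hU1; exact hpAll v (Ne.symm huv) C' hs
  · by_cases hv : v = p
    · subst hv; exact hup u hU1 C' hs
    · exact hAway u v hU1 hv huv C' hs

lemma contract (hP : Pres F) (hI : Indep F) (hU : Unanim F)
    {C₁ C₂ : Finset (Fin n)} (hd : Disjoint C₁ C₂) (h : Dec F (C₁ ∪ C₂)) :
    Dec F C₁ ∨ Dec F C₂ := by
  classical
  set p := x; set q := y; set r := z
  have hpq : p ≠ q := hxy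
  have hpr : p ≠ r := hxz
  have hqr : q ≠ r := hyz
  set s : Fin n → Fin 3 → ℕ :=
    fun i => if i ∈ C₁ then ![2,1,0] else if i ∈ C₂ then ![0,2,1] else ![1,0,2] with hs_def
  have hsinj : ∀ i, Function.Injective (s i) := by
    intro i; simp only [hs_def]; split_ifs <;> decide
  have hJ := tProf_just p q r hsinj
  have hmp : p = p ∨ p = q ∨ p = r := Or.inl rfl
  have hmq : q = p ∨ q = q ∨ q = r := Or.inr (Or.inl rfl)
  have hmr : r = p ∨ r = q ∨ r = r := Or.inr (Or.inr rfl)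
  have v0 := tVal_p p q
  have v1 := tVal_q hpq
  have v2 := tVal_r hpr hqr
  have eqr : ∀ i, tProf p q r s i q r ↔ i ∈ C₁ ∪ C₂ := by
    intro i
    rw [tProf_edge hmq hmr hqr i (hsinj i) (by rw [v1, v2]; decide), v1, v2]
    simp only [hs_def, Finset.mem_union]
    split_ifs with h1 h2 <;> simp [h1, *]
  have hFqr : F (tProf p q r s) q r :=
    (F_iff_win hI hJ hqr eqr).mpr (h q r hqr (C₁ ∪ C₂) (subset_refl _))
  have epr : ∀ i, tProf p q r s i p r ↔ i ∈ C₁ := by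
    intro i
    rw [tProf_edge hmp hmr hpr i (hsinj i) (by rw [v0, v2]; decide), v0, v2]
    simp only [hs_def]
    split_ifs with h1 h2 <;> simp [h1, *]
  have eqp : ∀ i, tProf p q r s i q p ↔ i ∈ C₂ := by
    intro i
    rw [tProf_edge hmq hmp (Ne.symm hpq) i (hsinj i) (by rw [v0, v1]; decide), v0, v1]
    simp only [hs_def]
    split_ifs with h1 h2
    · simp [Finset.disjoint_left.mp hd h1]
    · simp [h2]
    · simp [h2]
  by_cases hc : F (tProf p q r s) p r
  · exact Or.inl (FE hxy hxz hyz hP hI hU hpr ((F_iff_win hI hJ hpr epr).mp hc))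
  · right
    obtain ⟨P, hPaud, hF⟩ := hP (Fin 3) 0 1 2 (by decide) (by decide) (by decide)
      (tAtt p q r) (tVal p q) (tProf p q r s)
      (fun i => ⟨audOf (s i), audOf_isAudience (hsinj i), rfl⟩)
    have hFrp : F (tProf p q r s) r p := by
      rw [hF] at hc ⊢
      rw [defeats_edge hmp hmr hpr, v0, v2] at hc
      rw [defeats_edge hmr hmp (Ne.symm hpr), v0, v2]
      exact aud_asymm hPaud (not_not.mp hc)
    have hFqp : F (tProf p q r s) q p := by
      rw [hF] at hFqr hFrp ⊢
      rw [defeats_edge hmq hmr hqr, v1, v2] at hFqr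
      rw [defeats_edge hmr hmp (Ne.symm hpr), v0, v2] at hFrp
      rw [defeats_edge hmq hmp (Ne.symm hpq), v0, v1]
      exact aud_nP_trans hPaud (by decide) (by decide) hFqr hFrp
    exact FE hxy hxz hyz hP hI hU (Ne.symm hpq) ((F_iff_win hI hJ (Ne.symm hpq) eqp).mp hFqp)

lemma dec_empty (hP : Pres F) (hI : Indep F) (h : Dec F (∅ : Finset (Fin n))) : False := by
  have h1 : Win F x y ∅ := h x y hxy ∅ (subset_refl _)
  have h2 : Win F y x (∅ : Finset (Fin n))ᶜ := h y x (Ne.symm hxy) _ (Finset.empty_subset _)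
  exact (win_pair hP hI hxy ∅).mp h1 h2

lemma exists_sing (hP : Pres F) (hI : Indep F) (hU : Unanim F)
    (h : Dec F (Finset.univ : Finset (Fin n))) : ∃ i, Dec F {i} := by
  classical
  suffices H : ∀ k (C : Finset (Fin n)), C.card ≤ k → Dec F C → ∃ i, Dec F {i} from
    H _ Finset.univ le_rfl h
  intro k
  induction k with
  | zero =>
    intro C hc hD
    have hC : C = ∅ := Finset.card_eq_zero.mp (Nat.le_zero.mp hc)
    exact (dec_empty hxy hxz hyz hP hI (hC ▸ hD)).elim
  | succ k ih =>
    intro C hc hD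
    rcases Finset.eq_empty_or_nonempty C with rfl | ⟨i, hi⟩
    · exact (dec_empty hxy hxz hyz hP hI hD).elim
    · have hun : ({i} : Finset (Fin n)) ∪ C.erase i = C := by
        rw [← Finset.insert_eq, Finset.insert_erase hi]
      have hdisj : Disjoint ({i} : Finset (Fin n)) (C.erase i) := by
        simp [Finset.disjoint_singleton_left]
      rcases contract hxy hxz hyz hP hI hU hdisj (by rwa [hun]) with h1 | h2
      · exact ⟨i, h1⟩
      · refine ih (C.erase i) ?_ h2
        have := Finset.card_erase_of_mem hi
        have h1 : 1 ≤ C.card := Finset.card_pos.mpr ⟨i, hi⟩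
        omega

lemma win_iff (hP : Pres F) {i : Fin n} (hdec : Dec F {i}) {u v : A} (huv : u ≠ v)
    (hI : Indep F) (C : Finset (Fin n)) : Win F u v C ↔ i ∈ C := by
  constructor
  · intro hw
    by_contra hic
    have h2 : Win F v u Cᶜ :=
      hdec v u (Ne.symm huv) Cᶜ (Finset.singleton_subset_iff.mpr (Finset.mem_compl.mpr hic))
    exact (win_pair hP hI huv C).mp hw h2
  · intro hic
    exact hdec u v huv C (Finset.singleton_subset_iff.mpr hic)


lemma dict (hP : Pres F) (hI : Indep F) (hU : Unanim F) :
    ∃ i : Fin n, ∀ AF : Fin n → A → A → Prop, JustifiableProfile AF → F AF = AF i := by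
  classical
  have hUniv : Dec F (Finset.univ : Finset (Fin n)) := by
    intro u v huv C' hsub
    have hC' : C' = Finset.univ := Finset.univ_subset_iff.mp hsub
    rw [hC']
    exact win_univ hU huv
  obtain ⟨i, hdec⟩ := exists_sing hxy hxz hyz hP hI hU hUniv
  refine ⟨i, fun AF hJ => ?_⟩
  funext u v
  by_cases huv : u = v
  · subst huv
    obtain ⟨V₀, att, val, hw⟩ := id hJ
    have hsame : ∀ j, AF j u u ↔ att u u := by
      intro j
      obtain ⟨Pj, hPj, hj⟩ := hw j
      rw [hj]
      unfold defeats
      simp [hPj.1 (val u)]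
    by_cases hself : att u u
    · set AF' : Fin n → A → A → Prop :=
        fun _ => defeats (fun a b => a = u ∧ b = u) (fun _ => (0 : Fin 3)) (audOf ![0,1,2])
        with hAF'
      have hw' : ∀ j : Fin n, ∃ P : Fin 3 → Fin 3 → Prop, IsAudience P ∧
          AF' j = defeats (fun a b => a = u ∧ b = u) (fun _ => (0 : Fin 3)) P :=
        fun j => ⟨_, audOf_isAudience (by decide), rfl⟩
      have hJ' : JustifiableProfile AF' := ⟨Fin 3, _, _, hw'⟩
      obtain ⟨P, hPaud, hF'⟩ := hP (Fin 3) 0 1 2 (by decide) (by decide) (by decide)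
        (fun a b => a = u ∧ b = u) (fun _ => (0 : Fin 3)) AF' hw'
      have h1 : F AF' u u := by
        rw [hF']
        exact ⟨⟨rfl, rfl⟩, fun hc => hPaud.1 0 hc⟩
      have h2 : ∀ j, AF' j u u := fun j => ⟨⟨rfl, rfl⟩, fun hc => lt_irrefl _ hc⟩
      have hiff := hI AF AF' hJ hJ' u u (Set.ext fun j => by simp [hsame j, hself, h2 j])
      exact propext ⟨fun _ => (hsame i).mpr hself, fun _ => hiff.mpr h1⟩
    · set AF' : Fin n → A → A → Prop :=
        fun _ => defeats (fun _ _ => False) (fun _ : A => (0 : Fin 3)) (audOf ![0,1,2])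
        with hAF'
      have hw' : ∀ j : Fin n, ∃ P : Fin 3 → Fin 3 → Prop, IsAudience P ∧
          AF' j = defeats (fun _ _ => False) (fun _ : A => (0 : Fin 3)) P :=
        fun j => ⟨_, audOf_isAudience (by decide), rfl⟩
      have hJ' : JustifiableProfile AF' := ⟨Fin 3, _, _, hw'⟩
      obtain ⟨P, hPaud, hF'⟩ := hP (Fin 3) 0 1 2 (by decide) (by decide) (by decide)
        (fun _ _ => False) (fun _ : A => (0 : Fin 3)) AF' hw'
      have h1 : ¬ F AF' u u := by
        rw [hF']
        exact fun hc => hc.1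
      have h2 : ∀ j, ¬ AF' j u u := fun j hc => hc.1
      have hiff := hI AF AF' hJ hJ' u u
        (Set.ext fun j => by simp [hsame j, hself, h2 j])
      exact propext ⟨fun h => (h1 (hiff.mp h)).elim, fun h => (hself ((hsame i).mp h)).elim⟩
  · set C : Finset (Fin n) := Finset.univ.filter (fun j => AF j u v) with hC
    have hmem : ∀ j, AF j u v ↔ j ∈ C := by
      intro j; simp [hC]
    have h1 : F AF u v ↔ Win F u v C := F_iff_win hI hJ huv hmem
    have h2 : Win F u v C ↔ i ∈ C := win_iff hxy hxz hyz hP hdec huv hI C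
    exact propext (h1.trans (h2.trans (hmem i).symm))

end Rule

end ArrowVAF

/-- with at least three arguments, any graph aggregation rule restricted
to justifiable profiles that preserves being a defeat graph (with respect to VAFs
having at least three values) is not independent, not unanimous, or dictatorial. -/
theorem graph_rule_on_justifiable_profiles_not_independent_unanimous_nondictatorial
    (A : Type) (a₁ a₂ a₃ : A) (ha₁₂ : a₁ ≠ a₂) (ha₁₃ : a₁ ≠ a₃) (ha₂₃ : a₂ ≠ a₃)
    (n : ℕ)
    (F : (Fin n → A → A → Prop) → (A → A → Prop))
    (hPreserves : ∀ (V : Type) (v₁ v₂ v₃ : V), v₁ ≠ v₂ → v₁ ≠ v₃ → v₂ ≠ v₃ →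
      ∀ (att : A → A → Prop) (val : A → V) (AF : Fin n → A → A → Prop),
        (∀ i, ∃ P : V → V → Prop, IsAudience P ∧ AF i = defeats att val P) →
        ∃ P : V → V → Prop, IsAudience P ∧ F AF = defeats att val P) :
    ¬ (∀ (AF AF' : Fin n → A → A → Prop),
          JustifiableProfile AF → JustifiableProfile AF' →
          ∀ a b, {i : Fin n | AF i a b} = {i : Fin n | AF' i a b} →
            (F AF a b ↔ F AF' a b)) ∨
    ¬ (∀ AF : Fin n → A → A → Prop, JustifiableProfile AF →
          ∀ a b, (∀ i, AF i a b) → F AF a b) ∨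
    (∃ i : Fin n, ∀ AF : Fin n → A → A → Prop, JustifiableProfile AF → F AF = AF i) := by
  by_cases hInd : (∀ (AF AF' : Fin n → A → A → Prop),
          JustifiableProfile AF → JustifiableProfile AF' →
          ∀ a b, {i : Fin n | AF i a b} = {i : Fin n | AF' i a b} →
            (F AF a b ↔ F AF' a b))
  · by_cases hUn : (∀ AF : Fin n → A → A → Prop, JustifiableProfile AF →
          ∀ a b, (∀ i, AF i a b) → F AF a b)
    · exact Or.inr (Or.inr (ArrowVAF.dict ha₁₂ ha₁₃ ha₂₃ hPreserves hInd hUn))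
    · exact Or.inr (Or.inl hUn)
  · exact Or.inl hInd
end

section
/- A preference aggregation rule F over a set V of values with |V| ≥ 2 is interpretation independent if and only if F is independent. -/
lemma aud_not_iff {V : Type} {P : V → V → Prop} (h : IsAudience P) {u v : V} (huv : u ≠ v) :
    ¬ P u v ↔ P v u := by
  obtain ⟨hirr, htr, hcmp⟩ := h
  constructor
  · intro hn
    rcases hcmp u v huv with h1 | h1
    · exact absurd h1 hn
    · exact h1
  · intro h1 hn
    exact hirr u (htr u v u hn h1)

/-- a preference aggregation rule over a set of values with at least two
elements is interpretation independent (for every VAF, any two profiles of audiences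
justifying the same profile of defeat graphs induce the same collective defeat graph)
iff it is independent (the collective ranking of a pair of values depends only on the
set of agents ranking the first above the second). -/
theorem interpretation_independent_iff_independent
    (V : Type) (v w : V) (hvw : v ≠ w) (n : ℕ)
    (F : (Fin n → V → V → Prop) → (V → V → Prop))
    (hF : ∀ P : Fin n → V → V → Prop, (∀ i, IsAudience (P i)) → IsAudience (F P)) :
    (∀ (A : Type) (att : A → A → Prop) (val : A → V) (P P' : Fin n → V → V → Prop),
        (∀ i, IsAudience (P i)) → (∀ i, IsAudience (P' i)) →
        (∀ i, defeats att val (P i) = defeats att val (P' i)) →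
        defeats att val (F P) = defeats att val (F P'))
    ↔
    (∀ P P' : Fin n → V → V → Prop,
        (∀ i, IsAudience (P i)) → (∀ i, IsAudience (P' i)) →
        ∀ v₁ v₂ : V, {i : Fin n | P i v₁ v₂} = {i : Fin n | P' i v₁ v₂} →
          (F P v₁ v₂ ↔ F P' v₁ v₂)) := by
  constructor
  · -- interpretation independence → independence
    intro hII P P' hP hP' v₁ v₂ hset
    have hi : ∀ i, P i v₁ v₂ ↔ P' i v₁ v₂ := fun i => by
      have := Set.ext_iff.mp hset i; simpa using this
    by_cases hne : v₁ = v₂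
    · subst hne
      constructor
      · intro h; exact absurd h ((hF P hP).1 v₁)
      · intro h; exact absurd h ((hF P' hP').1 v₁)
    · have key := hII Bool (fun _ _ => True) (fun b => if b then v₁ else v₂) P P' hP hP'
        (by
          intro i
          funext a b
          apply propext
          cases a <;> cases b <;> simp only [defeats, true_and, Bool.false_eq_true,
            if_false, if_true]
          · simp [(hP i).1 v₂, (hP' i).1 v₂]
          · exact not_congr (hi i)
          · constructor
            · intro h
              rw [aud_not_iff (hP i) (Ne.symm hne)] at h
              rw [aud_not_iff (hP' i) (Ne.symm hne)]
              exact (hi i).mp h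
            · intro h
              rw [aud_not_iff (hP' i) (Ne.symm hne)] at h
              rw [aud_not_iff (hP i) (Ne.symm hne)]
              exact (hi i).mpr h
          · simp [(hP i).1 v₁, (hP' i).1 v₁])
      have h2 := congrFun (congrFun key true) false
      simp only [defeats, eq_iff_iff, if_pos, if_neg, Bool.ite_eq_true_distrib] at h2
      simp only [if_true, Bool.false_eq_true, if_false, true_and] at h2
      rw [aud_not_iff (hF P hP) (Ne.symm hne), aud_not_iff (hF P' hP') (Ne.symm hne)] at h2
      exact h2
  · -- independence → interpretation independence
    intro hInd A att val P P' hP hP' hsame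
    funext a b
    apply propext
    by_cases hab : att a b
    · have hiff : ∀ i, P i (val b) (val a) ↔ P' i (val b) (val a) := by
        intro i
        have := congrFun (congrFun (hsame i) a) b
        simp only [defeats, eq_iff_iff, hab, true_and] at this
        exact not_iff_not.mp this
      have hset : {i : Fin n | P i (val b) (val a)} = {i : Fin n | P' i (val b) (val a)} :=
        Set.ext fun i => hiff i
      have h := hInd P P' hP hP' (val b) (val a) hset
      simp only [defeats, hab, true_and]
      exact not_congr h
    · simp [defeats, hab]
end

section
/- Let V be a set of values with |V| ≥ 3. The only unanimous preference aggregation rule over V that corresponds to some graph aggregation rule is a dictatorship: if F is unanimous and some graph aggregation rule corresponds to F, then F is dictatorial. -/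
def ordKey {V : Type} (κ : V → ℕ) (u v : V) : Prop :=
  κ u < κ v ∨ (κ u = κ v ∧ WellOrderingRel u v)

lemma isAudience_ordKey {V : Type} (κ : V → ℕ) : IsAudience (ordKey κ) := by
  refine ⟨?_, ?_, ?_⟩
  · rintro v (h | ⟨-, h⟩)
    · exact lt_irrefl _ h
    · exact irrefl_of WellOrderingRel v h
  · rintro u v w (h1 | ⟨h1, h1'⟩) (h2 | ⟨h2, h2'⟩)
    · exact Or.inl (h1.trans h2)
    · exact Or.inl (h2 ▸ h1)
    · exact Or.inl (h1 ▸ h2)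
    · exact Or.inr ⟨h1.trans h2, trans_of WellOrderingRel h1' h2'⟩
  · intro v w hvw
    rcases lt_trichotomy (κ v) (κ w) with h | h | h
    · exact Or.inl (Or.inl h)
    · rcases trichotomous_of WellOrderingRel v w with h' | h' | h'
      · exact Or.inl (Or.inr ⟨h, h'⟩)
      · exact absurd h' hvw
      · exact Or.inr (Or.inr ⟨h.symm, h'⟩)
    · exact Or.inr (Or.inl h)

lemma ordKey_of_lt {V : Type} {κ : V → ℕ} {u v : V} (h : κ u < κ v) : ordKey κ u v := Or.inl h

lemma not_ordKey_of_lt {V : Type} {κ : V → ℕ} {u v : V} (h : κ v < κ u) : ¬ ordKey κ u v := by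
  rintro (h' | ⟨h', -⟩) <;> omega

lemma aud_asymm {V : Type} {P : V → V → Prop} (h : IsAudience P) {u v : V}
    (h1 : P u v) : ¬ P v u := fun h2 => h.1 u (h.2.1 _ _ _ h1 h2)

lemma aud_total {V : Type} {P : V → V → Prop} (h : IsAudience P) {u v : V}
    (hne : u ≠ v) (h1 : ¬ P u v) : P v u := (h.2.2 u v hne).resolve_left h1

/-- over a set of at least three values, the only unanimous preference
aggregation rule corresponding to some graph aggregation rule is a dictatorship. -/
theorem unanimous_rule_corresponding_to_graph_rule_is_dictatorial
    (V : Type) (v₁ v₂ v₃ : V) (h₁₂ : v₁ ≠ v₂) (h₁₃ : v₁ ≠ v₃) (h₂₃ : v₂ ≠ v₃)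
    (n : ℕ)
    (F : (Fin n → V → V → Prop) → (V → V → Prop))
    (hF : ∀ P : Fin n → V → V → Prop, (∀ i, IsAudience (P i)) → IsAudience (F P))
    (hUnanimous : ∀ P : Fin n → V → V → Prop, (∀ i, IsAudience (P i)) →
      ∀ v w, (∀ i, P i v w) → F P v w)
    (hCorresponds : ∃ F' : ∀ A : Type, (Fin n → A → A → Prop) → (A → A → Prop),
      ∀ (A : Type) (att : A → A → Prop) (val : A → V)
        (AF : Fin n → A → A → Prop) (P : Fin n → V → V → Prop),
        (∀ i, IsAudience (P i)) → (∀ i, AF i = defeats att val (P i)) →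
        F' A AF = defeats att val (F P)) :
    ∃ i : Fin n, ∀ P : Fin n → V → V → Prop, (∀ j, IsAudience (P j)) → F P = P i := by
  classical
  obtain ⟨F', hF'⟩ := hCorresponds
  -- n must be positive
  have hn : 0 < n := by
    rcases Nat.eq_zero_or_pos n with rfl | h
    · have hP : ∀ i : Fin 0, IsAudience ((fun _ : Fin 0 => ordKey (fun _ : V => 0)) i) :=
        fun i => isAudience_ordKey _
      have := hUnanimous _ hP v₁ v₁ (fun i => i.elim0)
      exact absurd this ((hF _ hP).1 v₁)
    · exact h
  -- Independence of irrelevant alternatives, derived from correspondence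
  have hIIA : ∀ P Q : Fin n → V → V → Prop, (∀ i, IsAudience (P i)) → (∀ i, IsAudience (Q i)) →
      ∀ v w : V, v ≠ w → (∀ i, P i v w ↔ Q i v w) → (F P v w ↔ F Q v w) := by
    intro P Q hP hQ v w hvw hagree
    have hagree' : ∀ i, P i w v ↔ Q i w v := by
      intro i
      constructor
      · intro h
        exact aud_total (hQ i) hvw (fun h' => aud_asymm (hP i) h ((hagree i).mpr h'))
      · intro h
        exact aud_total (hP i) hvw (fun h' => aud_asymm (hQ i) h ((hagree i).mp h'))
    set val : Bool → V := fun x => cond x v w with hval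
    set attT : Bool → Bool → Prop := fun _ _ => True with hatt
    have hgraph : ∀ i, defeats attT val (P i) = defeats attT val (Q i) := by
      intro i
      funext a b
      unfold defeats
      cases a <;> cases b <;> simp only [hval, hatt, Bool.cond_true, Bool.cond_false,
        true_and, eq_iff_iff]
      · exact iff_of_true (fun h => (hP i).1 w h) (fun h => (hQ i).1 w h)
      · exact not_congr (hagree i)
      · exact not_congr (hagree' i)
      · exact iff_of_true (fun h => (hP i).1 v h) (fun h => (hQ i).1 v h)
    have h1 : F' Bool (fun i => defeats attT val (P i)) = defeats attT val (F P) :=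
      hF' Bool attT val _ P hP (fun i => rfl)
    have h2 : F' Bool (fun i => defeats attT val (P i)) = defeats attT val (F Q) :=
      hF' Bool attT val _ Q hQ (fun i => hgraph i)
    have h3 : defeats attT val (F P) = defeats attT val (F Q) := h1.symm.trans h2
    have h4 := congrFun (congrFun h3 false) true
    unfold defeats at h4
    simp only [hval, hatt, Bool.cond_true, Bool.cond_false, true_and, eq_iff_iff] at h4
    exact not_iff_not.mp h4
  -- Extremal lemma
  have hExt : ∀ (b : V) (P : Fin n → V → V → Prop), (∀ i, IsAudience (P i)) →
      (∀ i, (∀ x, x ≠ b → P i b x) ∨ (∀ x, x ≠ b → P i x b)) →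
      ((∀ x, x ≠ b → F P b x) ∨ (∀ x, x ≠ b → F P x b)) := by
    intro b P hP hext
    by_contra hcon
    push_neg at hcon
    obtain ⟨⟨a, hab, hFba⟩, ⟨c, hcb, hFcb⟩⟩ := hcon
    have hFP := hF P hP
    have hab' : F P a b := aud_total hFP (Ne.symm hab) hFba
    have hbc : F P b c := aud_total hFP hcb hFcb
    have hac : F P a c := hFP.2.1 _ _ _ hab' hbc
    have hanec : a ≠ c := by rintro rfl; exact hFP.1 a hac
    set κ : Fin n → V → ℕ := fun i u =>
      if (∀ x, x ≠ b → P i b x)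
      then (if u = b then 0 else if u = c then 1 else if u = a then 2 else 3)
      else (if u = c then 0 else if u = a then 1 else if u = b then 2 else 3) with hκ
    set Q : Fin n → V → V → Prop := fun i => ordKey (κ i) with hQdef
    have hQ : ∀ i, IsAudience (Q i) := fun i => isAudience_ordKey _
    have hba : b ≠ a := Ne.symm hab
    have hbc' : b ≠ c := Ne.symm hcb
    have hca : c ≠ a := Ne.symm hanec
    have hQca : ∀ i, Q i c a := by
      intro i
      apply ordKey_of_lt
      simp [hκ, hab, hcb, hanec, hba, hbc', hca]
      split_ifs with hc <;> omega
    have hag1 : ∀ i, P i a b ↔ Q i a b := by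
      intro i
      by_cases h : ∀ x, x ≠ b → P i b x
      · refine iff_of_false (aud_asymm (hP i) (h a hab)) (not_ordKey_of_lt ?_)
        simp [hκ, hab, hcb, hanec, hba, hbc', hca]
        split_ifs with hc
        all_goals first | omega | exact absurd h hc | exact absurd hc h
      · have hbot : ∀ x, x ≠ b → P i x b := (hext i).resolve_left h
        refine iff_of_true (hbot a hab) (ordKey_of_lt ?_)
        simp [hκ, hab, hcb, hanec, hba, hbc', hca]
        split_ifs with hc
        all_goals first | omega | exact absurd h hc | exact absurd hc h
    have hag2 : ∀ i, P i b c ↔ Q i b c := by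
      intro i
      by_cases h : ∀ x, x ≠ b → P i b x
      · refine iff_of_true (h c hcb) (ordKey_of_lt ?_)
        simp [hκ, hab, hcb, hanec, hba, hbc', hca]
        split_ifs with hc
        all_goals first | omega | exact absurd h hc | exact absurd hc h
      · have hbot : ∀ x, x ≠ b → P i x b := (hext i).resolve_left h
        refine iff_of_false (aud_asymm (hP i) (hbot c hcb)) (not_ordKey_of_lt ?_)
        simp [hκ, hab, hcb, hanec, hba, hbc', hca]
        split_ifs with hc
        all_goals first | omega | exact absurd h hc | exact absurd hc h
    have hQab : F Q a b := (hIIA P Q hP hQ a b hab hag1).mp hab'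
    have hQbc : F Q b c := (hIIA P Q hP hQ b c (Ne.symm hcb) hag2).mp hbc
    have hQac : F Q a c := (hF Q hQ).2.1 _ _ _ hQab hQbc
    exact aud_asymm (hF Q hQ) hQac (hUnanimous Q hQ c a hQca)
  -- Pivotal voter for each value b
  have hPiv : ∀ b : V, ∃ i : Fin n,
      (∀ x y, x ≠ b → y ≠ b → x ≠ y → ∀ P, (∀ j, IsAudience (P j)) → P i x y → F P x y) ∧
      (∃ R S : Fin n → V → V → Prop, (∀ j, IsAudience (R j)) ∧ (∀ j, IsAudience (S j)) ∧
        (∀ j, j ≠ i → ∀ u v, R j u v ↔ S j u v) ∧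
        (∀ a, a ≠ b → F R a b) ∧ (∀ a, a ≠ b → F S b a)) := by
    intro b
    set π : ℕ → Fin n → V → V → Prop := fun k i => ordKey (fun u =>
        if u = b then (if i.val < k then 0 else 1) else (if i.val < k then 1 else 0)) with hπ
    have hπaud : ∀ k (i : Fin n), IsAudience (π k i) := fun k i => isAudience_ordKey _
    have hπtop : ∀ k (j : Fin n), j.val < k → ∀ x, x ≠ b → π k j b x := by
      intro k j hj x hx
      apply ordKey_of_lt
      simp [hπ, hj, hx]
    have hπbot : ∀ k (j : Fin n), ¬ j.val < k → ∀ x, x ≠ b → π k j x b := by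
      intro k j hj x hx
      apply ordKey_of_lt
      simp [hπ, hj, hx]
    obtain ⟨a₀, ha₀⟩ : ∃ a, a ≠ b := by
      by_cases h : v₁ = b
      · exact ⟨v₂, fun h' => h₁₂ (h.trans h'.symm)⟩
      · exact ⟨v₁, h⟩
    set p : ℕ → Prop := fun k => ∀ x, x ≠ b → F (π k) b x with hp
    have hex : ∃ k, p k := by
      refine ⟨n, fun x hx => ?_⟩
      exact hUnanimous _ (hπaud n) b x (fun i => hπtop n i i.isLt x hx)
    set k : ℕ := Nat.find hex with hkdef
    have hktop : p k := Nat.find_spec hex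
    have hBot0 : ∀ x, x ≠ b → F (π 0) x b := by
      intro x hx
      exact hUnanimous _ (hπaud 0) x b (fun i => hπbot 0 i (by omega) x hx)
    have hkpos : 0 < k := by
      rcases Nat.eq_zero_or_pos k with h | h
      · exact absurd (hBot0 a₀ ha₀) (aud_asymm (hF _ (hπaud 0)) (h ▸ hktop a₀ ha₀))
      · exact h
    have hkle : k ≤ n := Nat.find_le (fun x hx =>
      hUnanimous _ (hπaud n) b x (fun i => hπtop n i i.isLt x hx))
    set i : Fin n := ⟨k - 1, by omega⟩ with hidef
    have hbotprev : ∀ x, x ≠ b → F (π (k - 1)) x b := by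
      have hextr := hExt b (π (k - 1)) (hπaud _) (fun j => by
        by_cases h : j.val < k - 1
        · exact Or.inl (hπtop _ j h)
        · exact Or.inr (hπbot _ j h))
      rcases hextr with h | h
      · exact absurd h (Nat.find_min hex (by omega))
      · exact h
    refine ⟨i, ?_, π (k - 1), π k, hπaud _, hπaud _, ?_, hbotprev, fun a ha => hktop a ha⟩
    · -- dictator over pairs not involving b
      intro x y hx hy hxy P hP hPixy
      set κQ : Fin n → V → ℕ := fun j u =>
        if j.val < k - 1 then
          (if u = b then 0 else if u = x then (if P j x y then 1 else 2)
            else if u = y then (if P j x y then 2 else 1) else 3)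
        else if j.val = k - 1 then
          (if u = x then 0 else if u = b then 1 else if u = y then 2 else 3)
        else
          (if u = x then (if P j x y then 0 else 1)
            else if u = y then (if P j x y then 1 else 0)
            else if u = b then 2 else 3) with hκQ
      set Q : Fin n → V → V → Prop := fun j => ordKey (κQ j) with hQd
      have hQaud : ∀ j, IsAudience (Q j) := fun j => isAudience_ordKey _
      have hbx : b ≠ x := Ne.symm hx
      have hby : b ≠ y := Ne.symm hy
      have hyx : y ≠ x := Ne.symm hxy
      -- agreement with π (k-1) on (x, b)
      have hagxb : ∀ j, Q j x b ↔ π (k - 1) j x b := by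
        intro j
        by_cases hj : j.val < k - 1
        · refine iff_of_false (not_ordKey_of_lt ?_)
            (aud_asymm (hπaud _ j) (hπtop _ j hj x hx))
          simp only [hκQ]
          simp only [if_pos hj, if_neg hbx, if_pos rfl]
          split_ifs <;> omega
        · refine iff_of_true (ordKey_of_lt ?_) (hπbot _ j hj x hx)
          simp only [hκQ]
          by_cases hj' : j.val = k - 1 <;> simp [hj, hj', hx, hbx, hxy] <;>
            split_ifs <;> omega
      -- agreement with π k on (b, y)
      have hagby : ∀ j, Q j b y ↔ π k j b y := by
        intro j
        by_cases hj : j.val < k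
        · refine iff_of_true (ordKey_of_lt ?_) (hπtop _ j hj y hy)
          simp only [hκQ]
          by_cases hj' : j.val < k - 1 <;> by_cases hj'' : j.val = k - 1 <;>
            simp [hj', hj'', hy, hby, hbx, hyx] <;> split_ifs <;> omega
        · refine iff_of_false (not_ordKey_of_lt ?_)
            (aud_asymm (hπaud _ j) (hπbot _ j hj y hy))
          have hj' : ¬ j.val < k - 1 := by omega
          have hj'' : ¬ j.val = k - 1 := by omega
          simp only [hκQ]
          simp [hj', hj'', hy, hby, hbx, hyx]
          split_ifs <;> omega
      -- agreement with P on (x, y)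
      have hagxy : ∀ j, P j x y ↔ Q j x y := by
        intro j
        by_cases hj'' : j.val = k - 1
        · have hji : j = i := Fin.ext (by simpa [hidef] using hj'')
          refine iff_of_true (hji ▸ hPixy) (ordKey_of_lt ?_)
          have hj' : ¬ j.val < k - 1 := by omega
          simp only [hκQ]
          simp [hj', hj'', hx, hy, hxy, hyx, hbx, hby]
        · by_cases hp : P j x y
          · refine iff_of_true hp (ordKey_of_lt ?_)
            simp only [hκQ]
            by_cases hj : j.val < k - 1 <;>
              simp [hj, hj'', hx, hy, hxy, hyx, hbx, hby, hp]
          · refine iff_of_false hp (not_ordKey_of_lt ?_)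
            simp only [hκQ]
            by_cases hj : j.val < k - 1 <;>
              simp [hj, hj'', hx, hy, hxy, hyx, hbx, hby, hp]
      have hQxb : F Q x b :=
        (hIIA Q (π (k - 1)) hQaud (hπaud _) x b hx hagxb).mpr (hbotprev x hx)
      have hQby : F Q b y :=
        (hIIA Q (π k) hQaud (hπaud _) b y hby hagby).mpr (hktop y hy)
      have hQxy : F Q x y := (hF Q hQaud).2.1 _ _ _ hQxb hQby
      exact (hIIA P Q hP hQaud x y hxy hagxy).mpr hQxy
    · -- π (k-1) and π k agree off i
      intro j hj u v
      have hjv : j.val ≠ k - 1 := fun h => hj (Fin.ext (by simpa [hidef] using h))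
      have hiff : (j.val < k - 1) ↔ (j.val < k) := by omega
      have heq : π (k - 1) j = π k j := by
        simp only [hπ]
        congr 1
        funext u
        simp only [hiff]
      rw [heq]
  -- assemble: the pivot for v₁ is a dictator
  obtain ⟨i, hdict1, _⟩ := hPiv v₁
  -- pivot for any other c coincides with i
  have key : ∀ c : V, c ≠ v₁ → ∀ x y, x ≠ c → y ≠ c → x ≠ y →
      ∀ P, (∀ j, IsAudience (P j)) → P i x y → F P x y := by
    intro c hc
    obtain ⟨j, hdictj, R, S, hR, hS, hRS, hRb, hSb⟩ := hPiv c
    have hji : j = i := by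
      by_contra hne
      obtain ⟨a, hac, hav⟩ : ∃ a, a ≠ c ∧ a ≠ v₁ := by
        by_cases h2 : v₂ = c
        · exact ⟨v₃, fun h => h₂₃ (h2.trans h.symm), Ne.symm h₁₃⟩
        · exact ⟨v₂, h2, Ne.symm h₁₂⟩
      have hRa : F R a c := hRb a hac
      have hSa : F S c a := hSb a hac
      rcases (hR i).2.2 a c hac with h | h
      · have hSi : S i a c := (hRS i (Ne.symm hne) a c).mp h
        exact aud_asymm (hF S hS) (hdict1 a c hav hc hac S hS hSi) hSa
      · exact aud_asymm (hF R hR) (hdict1 c a hc hav (Ne.symm hac) R hR h) hRa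
    exact fun x y hxc hyc hxy P hP h => hdictj x y hxc hyc hxy P hP (hji ▸ h)
  have hdictall : ∀ x y : V, x ≠ y → ∀ P, (∀ j, IsAudience (P j)) → P i x y → F P x y := by
    intro x y hxy
    by_cases hx1 : x ≠ v₁ ∧ y ≠ v₁
    · exact hdict1 x y hx1.1 hx1.2 hxy
    · push_neg at hx1
      obtain ⟨c, hcx, hcy, hcv⟩ : ∃ c, x ≠ c ∧ y ≠ c ∧ c ≠ v₁ := by
        by_cases hxv : x = v₁
        · subst hxv
          by_cases hy2 : y = v₂
          · subst hy2; exact ⟨v₃, h₁₃, h₂₃, Ne.symm h₁₃⟩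
          · exact ⟨v₂, h₁₂, hy2, Ne.symm h₁₂⟩
        · have hyv : y = v₁ := hx1 hxv
          subst hyv
          by_cases hx2 : x = v₂
          · subst hx2; exact ⟨v₃, h₂₃, h₁₃, Ne.symm h₁₃⟩
          · exact ⟨v₂, hx2, h₁₂, Ne.symm h₁₂⟩
      exact key c hcv x y hcx hcy hxy
  refine ⟨i, fun P hP => ?_⟩
  funext x y
  apply propext
  by_cases hxy : x = y
  · subst hxy
    exact iff_of_false ((hF P hP).1 x) ((hP i).1 x)
  · constructor
    · intro h
      by_contra hni
      have : P i y x := aud_total (hP i) hxy hni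
      exact aud_asymm (hF P hP) (hdictall y x (Ne.symm hxy) P hP this) h
    · exact hdictall x y hxy P hP
end

section
/- For every VAF = ⟨A, →, V, val⟩: every defeat graph of the VAF is justified by a unique audience (i.e., for any two audiences P, P', if ⟨A, →_P⟩ = ⟨A, →_{P'}⟩ then P = P') if and only if for every pair of distinct values v_1, v_2 ∈ V there is a pair of arguments a_1, a_2 ∈ A with val(a_1) = v_1, val(a_2) = v_2, and a_1 → a_2 or a_2 → a_1. -/
lemma aud_asymm_iff {V : Type} {P : V → V → Prop} (h : IsAudience P) {u w : V}
    (hne : u ≠ w) : P u w ↔ ¬ P w u := by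
  obtain ⟨hirr, htr, hcomp⟩ := h
  constructor
  · intro h1 h2
    exact hirr u (htr u w u h1 h2)
  · intro h1
    rcases hcomp u w hne with h2 | h2
    · exact h2
    · exact absurd h2 h1

/-- for every VAF, every defeat graph is justified by a unique audience
iff for every pair of distinct values there is a pair of arguments carrying those
values with an attack between them (in one direction or the other). -/
theorem unique_justifying_audience_iff_attacks_between_all_value_pairs
    (A V : Type) (att : A → A → Prop) (val : A → V) :
    (∀ P P' : V → V → Prop, IsAudience P → IsAudience P' →
        defeats att val P = defeats att val P' → P = P')
    ↔
    (∀ v₁ v₂ : V, v₁ ≠ v₂ →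
        ∃ a₁ a₂ : A, val a₁ = v₁ ∧ val a₂ = v₂ ∧ (att a₁ a₂ ∨ att a₂ a₁)) := by
  classical
  constructor
  · -- uniqueness → attacks between all value pairs
    intro h v₁ v₂ hne
    by_contra hno
    push_neg at hno
    -- base well-order on V
    set r : V → V → Prop := WellOrderingRel with hr
    have hWO : IsWellOrder V r := WellOrderingRel.isWellOrder
    have rirr : ∀ v, ¬ r v v :=
      fun v => (hWO.wf.apply v).rec fun x _ ih hx => ih x hx hx
    have rtr : ∀ u v w : V, r u v → r v w → r u w := fun u v w => trans_of r
    have rtri : ∀ u v : V, u ≠ v → r u v ∨ r v u := by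
      intro u v hne'
      rcases trichotomous_of r u v with h1 | h1 | h1
      · exact Or.inl h1
      · exact absurd h1 hne'
      · exact Or.inr h1
    -- collapse map sending v₂ to v₁
    set g : V → V := fun x => if x = v₂ then v₁ else x with hg
    have hgv1 : g v₁ = v₁ := by simp [hg, hne]
    have hgv2 : g v₂ = v₁ := by simp [hg]
    have hginj : ∀ u w : V, g u = g w → u = w ∨ (u = v₁ ∧ w = v₂) ∨ (u = v₂ ∧ w = v₁) := by
      intro u w huw
      by_cases hu : u = v₂ <;> by_cases hw : w = v₂
      · exact Or.inl (hu.trans hw.symm)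
      · simp [hg, hu, hw] at huw
        exact Or.inr (Or.inr ⟨hu, huw.symm⟩)
      · simp [hg, hu, hw] at huw
        exact Or.inr (Or.inl ⟨huw, hw⟩)
      · simp [hg, hu, hw] at huw
        exact Or.inl huw
    set P : V → V → Prop := fun u w => r (g u) (g w) ∨ (u = v₁ ∧ w = v₂) with hPdef
    set P' : V → V → Prop := fun u w => r (g u) (g w) ∨ (u = v₂ ∧ w = v₁) with hP'def
    have haudP : IsAudience P := by
      refine ⟨?_, ?_, ?_⟩
      · intro v hv
        rcases hv with hv | ⟨h1, h2⟩
        · exact rirr _ hv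
        · exact hne (h1 ▸ h2)
      · intro u v w h1 h2
        rcases h1 with h1 | ⟨ha, hb⟩ <;> rcases h2 with h2 | ⟨hc, hd⟩
        · exact Or.inl (rtr _ _ _ h1 h2)
        · exact Or.inl (by rw [hd, hgv2, ← hgv1, ← hc]; exact h1)
        · exact Or.inl (by rw [ha, hgv1, ← hgv2, ← hb]; exact h2)
        · exact absurd (hb ▸ hc) hne.symm
      · intro u w huw
        by_cases hguw : g u = g w
        · rcases hginj u w hguw with h1 | ⟨h1, h2⟩ | ⟨h1, h2⟩
          · exact absurd h1 huw
          · exact Or.inl (Or.inr ⟨h1, h2⟩)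
          · exact Or.inr (Or.inr ⟨h2, h1⟩)
        · rcases rtri _ _ hguw with h1 | h1
          · exact Or.inl (Or.inl h1)
          · exact Or.inr (Or.inl h1)
    have haudP' : IsAudience P' := by
      refine ⟨?_, ?_, ?_⟩
      · intro v hv
        rcases hv with hv | ⟨h1, h2⟩
        · exact rirr _ hv
        · exact hne (h2 ▸ h1)
      · intro u v w h1 h2
        rcases h1 with h1 | ⟨ha, hb⟩ <;> rcases h2 with h2 | ⟨hc, hd⟩
        · exact Or.inl (rtr _ _ _ h1 h2)
        · exact Or.inl (by rw [hd, hgv1, ← hgv2, ← hc]; exact h1)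
        · exact Or.inl (by rw [ha, hgv2, ← hgv1, ← hb]; exact h2)
        · exact absurd (hb ▸ hc) hne
      · intro u w huw
        by_cases hguw : g u = g w
        · rcases hginj u w hguw with h1 | ⟨h1, h2⟩ | ⟨h1, h2⟩
          · exact absurd h1 huw
          · exact Or.inr (Or.inr ⟨h2, h1⟩)
          · exact Or.inl (Or.inr ⟨h1, h2⟩)
        · rcases rtri _ _ hguw with h1 | h1
          · exact Or.inl (Or.inl h1)
          · exact Or.inr (Or.inl h1)
    have hdef : defeats att val P = defeats att val P' := by
      funext a b
      apply propext
      by_cases hab : att a b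
      · have h1 : ¬ (val b = v₁ ∧ val a = v₂) := fun ⟨x, y⟩ => (hno b a x y).2 hab
        have h2 : ¬ (val b = v₂ ∧ val a = v₁) := fun ⟨x, y⟩ => (hno a b y x).1 hab
        constructor
        · rintro ⟨_, hp⟩
          refine ⟨hab, fun hq => hp ?_⟩
          rcases hq with hq | hq
          · exact Or.inl hq
          · exact absurd hq h2
        · rintro ⟨_, hp⟩
          refine ⟨hab, fun hq => hp ?_⟩
          rcases hq with hq | hq
          · exact Or.inl hq
          · exact absurd hq h1
      · exact ⟨fun hx => absurd hx.1 hab, fun hx => absurd hx.1 hab⟩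
    have hPP' : P = P' := h P P' haudP haudP' hdef
    have h1 : P v₁ v₂ := Or.inr ⟨rfl, rfl⟩
    rw [hPP'] at h1
    rcases h1 with h1 | ⟨h2, _⟩
    · rw [hgv1, hgv2] at h1
      exact rirr _ h1
    · exact hne h2
  · intro hatt P P' hP hP' heq
    funext u w
    apply propext
    by_cases huw : u = w
    · subst huw
      exact iff_of_false (hP.1 u) (hP'.1 u)
    · obtain ⟨a₁, a₂, hv1, hv2, hdir⟩ := hatt u w huw
      rcases hdir with ha | ha
      · -- att a₁ a₂ with val a₁ = u, val a₂ = w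
        have h2 : (att a₁ a₂ ∧ ¬ P (val a₂) (val a₁)) ↔
            (att a₁ a₂ ∧ ¬ P' (val a₂) (val a₁)) :=
          iff_of_eq (congrFun (congrFun heq a₁) a₂)
        rw [hv1, hv2] at h2
        have h3 : P w u ↔ P' w u := by
          constructor
          · intro hp
            by_contra hp'
            exact (h2.2 ⟨ha, hp'⟩).2 hp
          · intro hp
            by_contra hp'
            exact (h2.1 ⟨ha, hp'⟩).2 hp
        rw [aud_asymm_iff hP huw, aud_asymm_iff hP' huw, h3]
      · have h2 : (att a₂ a₁ ∧ ¬ P (val a₁) (val a₂)) ↔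
            (att a₂ a₁ ∧ ¬ P' (val a₁) (val a₂)) :=
          iff_of_eq (congrFun (congrFun heq a₂) a₁)
        rw [hv1, hv2] at h2
        constructor
        · intro hp
          by_contra hp'
          exact (h2.2 ⟨ha, hp'⟩).2 hp
        · intro hp
          by_contra hp'
          exact (h2.1 ⟨ha, hp'⟩).2 hp
end
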